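/- arXiv:2401.11680 — 2 statements merged into one kernel-verified Lean document; each statement's English description precedes it below -/
import Mathlib

section
/- Fix a positive integer n with q = ⌊n/3⌋, fix σ ∈ {±1}^n, and set h = max(h(σ), h(−σ)). Then ν_max(σ) ≥ min{q, ⌊(n−h)/2⌋}; that is, there exists a seating order producing at least min{q, ⌊(n−h)/2⌋} napkinless diners. -/
namespace Napkin

variable {n q : ℕ}

/-- The napkin to the left of seat `s`; napkin `s` itself is the one to the right of
seat `s`, placed between seats `s` and `s + 1` around the circular table. -/
def leftNapkin (s : Fin n) : Fin n := ⟨((s : ℕ) + (n - 1)) % n, Nat.mod_lt _ s.pos⟩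

/-- Process the diners `0, 1, …, n-1` in their arrival order.  Here `w i = j` means that
diner `j` sits in seat `i` (so diner `j` sits in seat `w.symm j`), and `σ j = true`
means diner `j` prefers the napkin to their right.  Each diner takes their preferred
adjacent napkin if it is unclaimed, otherwise the other adjacent napkin if it is
unclaimed, and otherwise is napkinless.  The returned state consists of the set of
claimed napkins and the set of napkinless diners. -/
def dine (σ : Fin n → Bool) (w : Equiv.Perm (Fin n)) :
    Finset (Fin n) × Finset (Fin n) :=
  (List.finRange n).foldl
    (fun st j =>
      let s := w.symm j
      let pref := if σ j then s else leftNapkin s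
      let other := if σ j then leftNapkin s else s
      if pref ∉ st.1 then (insert pref st.1, st.2)
      else if other ∉ st.1 then (insert other st.1, st.2)
      else (st.1, insert j st.2))
    (∅, ∅)

/-- The set of napkinless diners for the seating arrangement `(w, σ)`. -/
def napkinless (σ : Fin n → Bool) (w : Equiv.Perm (Fin n)) : Finset (Fin n) :=
  (dine σ w).2

/-- `ν(w,σ)`, the number of napkinless diners. -/
def nu (σ : Fin n → Bool) (w : Equiv.Perm (Fin n)) : ℕ := (napkinless σ w).card

/-- A seating order puts diner `1` in seat `1` (index `0` here). -/
def IsSeating (w : Equiv.Perm (Fin n)) : Prop :=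
  ∀ i : Fin n, (i : ℕ) = 0 → (w i : ℕ) = 0

instance : DecidablePred (IsSeating (n := n)) := fun w =>
  decidable_of_iff (∀ i : Fin n, (i : ℕ) = 0 → (w i : ℕ) = 0) Iff.rfl

/-- `ν_max(σ)`, the maximal number of napkinless diners over all seating orders. -/
def nuMax (σ : Fin n → Bool) : ℕ :=
  (Finset.univ.filter fun w : Equiv.Perm (Fin n) => IsSeating w).sup (nu σ)

/-- The value `±1` of a napkin preference. -/
def sign (b : Bool) : ℤ := if b then 1 else -1

/-- The drift `h(σ) = max(0, max over prefixes of σ₁ + ⋯ + σᵢ)`. -/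
def drift (σ : Fin n → Bool) : ℕ :=
  (Finset.range (n + 1)).sup fun i =>
    (∑ j ∈ Finset.univ.filter (fun j : Fin n => (j : ℕ) < i), sign (σ j)).toNat

/-- A bench collection: `q` pairwise disjoint triples `aᵢ < bᵢ < cᵢ` in `{1,…,n}`. -/
structure BenchCollection (n q : ℕ) where
  a : Fin q → Fin n
  b : Fin q → Fin n
  c : Fin q → Fin n
  hab : ∀ i, a i < b i
  hbc : ∀ i, b i < c i
  disj : ∀ i j : Fin q, i ≠ j →
    Disjoint ({a i, b i, c i} : Finset (Fin n)) ({a j, b j, c j} : Finset (Fin n))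

/-- A bench is balanced when its two smallest members have opposite preferences. -/
def Balanced (σ : Fin n → Bool) (β : BenchCollection n q) (i : Fin q) : Prop :=
  sign (σ (β.a i)) + sign (σ (β.b i)) = 0

instance (σ : Fin n → Bool) (β : BenchCollection n q) :
    DecidablePred (Balanced σ β) := fun i =>
  decidable_of_iff (sign (σ (β.a i)) + sign (σ (β.b i)) = 0) Iff.rfl

/-- `b(β,σ)`, the number of balanced benches of `β`. -/
def balance (σ : Fin n → Bool) (β : BenchCollection n q) : ℕ :=
  (Finset.univ.filter fun i => Balanced σ β i).card

/-! ### Auxiliary development -/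

section Aux
variable {σ : Fin n → Bool} {w : Equiv.Perm (Fin n)}

lemma mod_succ_left (a : ℕ) (hn : 0 < n) : ((a + 1) % n + (n - 1)) % n = a % n := by
  have h1 : ((a + 1) % n + (n - 1)) % n = (a + 1 + (n-1)) % n := by
    rw [Nat.add_mod, Nat.mod_mod_of_dvd, ← Nat.add_mod]; exact dvd_rfl
  rw [h1, show a + 1 + (n-1) = a + n by omega, Nat.add_mod_right]

lemma leftNapkin_of_succ {s t : Fin n} (h : (t : ℕ) = ((s : ℕ) + 1) % n) :
    leftNapkin t = s := by
  apply Fin.ext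
  show ((t : ℕ) + (n - 1)) % n = s
  rw [h, mod_succ_left _ s.pos, Nat.mod_eq_of_lt s.isLt]

lemma eq_succ_of_leftNapkin {s t : Fin n} (h : leftNapkin t = s) :
    (t : ℕ) = ((s : ℕ) + 1) % n := by
  have h1 : ((t : ℕ) + (n - 1)) % n = s := congrArg Fin.val h
  rw [← h1, Nat.mod_add_mod, show (t : ℕ) + (n - 1) + 1 = (t : ℕ) + n by
    have := t.pos; omega, Nat.add_mod_right, Nat.mod_eq_of_lt t.isLt]

lemma mem_take_finRange {m : ℕ} {j : Fin n} :
    j ∈ (List.finRange n).take m ↔ (j : ℕ) < m := by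
  rw [List.mem_iff_getElem]
  constructor
  · rintro ⟨i, hi, rfl⟩
    simp only [List.getElem_take, List.getElem_finRange]
    simp only [List.length_take, List.length_finRange] at hi
    simpa using (by omega : i < m)
  · intro hlt
    refine ⟨(j : ℕ), ?_, ?_⟩
    · simp only [List.length_take, List.length_finRange]
      exact lt_min hlt j.isLt
    · simp [List.getElem_take, List.getElem_finRange]

/-- One step of the dining process. -/
def dstep (σ : Fin n → Bool) (w : Equiv.Perm (Fin n))
    (st : Finset (Fin n) × Finset (Fin n)) (j : Fin n) :
    Finset (Fin n) × Finset (Fin n) :=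
  let s := w.symm j
  let pref := if σ j then s else leftNapkin s
  let other := if σ j then leftNapkin s else s
  if pref ∉ st.1 then (insert pref st.1, st.2)
  else if other ∉ st.1 then (insert other st.1, st.2)
  else (st.1, insert j st.2)

lemma dine_eq_foldl : dine σ w = (List.finRange n).foldl (dstep σ w) (∅, ∅) := rfl

lemma dstep_fst_subset (st : Finset (Fin n) × Finset (Fin n)) (j : Fin n) :
    st.1 ⊆ (dstep σ w st j).1 := by
  unfold dstep
  dsimp only
  split_ifs <;> simp [Finset.subset_insert]

lemma dstep_snd_subset (st : Finset (Fin n) × Finset (Fin n)) (j : Fin n) :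
    st.2 ⊆ (dstep σ w st j).2 := by
  unfold dstep
  dsimp only
  split_ifs <;> simp [Finset.subset_insert]

lemma dstep_fst_subset' (st : Finset (Fin n) × Finset (Fin n)) (j : Fin n) :
    (dstep σ w st j).1 ⊆ insert (w.symm j) (insert (leftNapkin (w.symm j)) st.1) := by
  unfold dstep
  dsimp only
  intro x hx
  by_cases hσ : σ j <;>
    simp only [hσ, if_true, if_false, Bool.false_eq_true] at hx <;>
    split_ifs at hx <;>
    simp only [Finset.mem_insert] at hx ⊢ <;> tauto

lemma foldl_fst_subset (l : List (Fin n)) (st : Finset (Fin n) × Finset (Fin n)) :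
    st.1 ⊆ (l.foldl (dstep σ w) st).1 := by
  induction l generalizing st with
  | nil => exact subset_rfl
  | cons a l ih => exact (dstep_fst_subset st a).trans (ih _)

lemma foldl_snd_subset (l : List (Fin n)) (st : Finset (Fin n) × Finset (Fin n)) :
    st.2 ⊆ (l.foldl (dstep σ w) st).2 := by
  induction l generalizing st with
  | nil => exact subset_rfl
  | cons a l ih => exact (dstep_snd_subset st a).trans (ih _)

/-- If diner `j` occurs in `l`, its preferred napkin is unclaimed, and no other diner in `l`
sits adjacent to that napkin, then the napkin gets claimed. -/
lemma claims (l : List (Fin n)) (st : Finset (Fin n) × Finset (Fin n)) (j : Fin n)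
    (x : Fin n)
    (hpref : x = (if σ j then w.symm j else leftNapkin (w.symm j)))
    (hj : j ∈ l)
    (hx : x ∉ st.1)
    (hother : ∀ j' ∈ l, j' ≠ j → x ≠ w.symm j' ∧ x ≠ leftNapkin (w.symm j')) :
    x ∈ (l.foldl (dstep σ w) st).1 := by
  revert hj hx hother
  induction l generalizing st with
  | nil => intro hj _ _; simp at hj
  | cons a l ih =>
    intro hj hx hother
    rcases eq_or_ne a j with rfl | hne
    · refine foldl_fst_subset l _ ?_
      show x ∈ (dstep σ w st a).1
      unfold dstep
      dsimp only
      rw [if_pos]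
      · cases hσ : σ a <;> simp [hσ] at hpref <;> simp [hσ, hpref]
      · cases hσ : σ a <;> simp [hσ] at hpref ⊢ <;> rw [← hpref] <;> exact hx
    · have hj' : j ∈ l := (List.mem_cons.mp hj).resolve_left (fun hh => hne hh.symm)
      have hxa := hother a List.mem_cons_self (fun hh => hne hh)
      refine ih _ hj' ?_ ?_
      · intro hmem
        have hsub := dstep_fst_subset' (σ := σ) (w := w) st a hmem
        simp only [Finset.mem_insert] at hsub
        rcases hsub with hh | hh | hh
        · exact hxa.1 hh
        · exact hxa.2 hh
        · exact hx hh
      · intro j' hj'' hne'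
        exact hother j' (List.mem_cons_of_mem _ hj'') hne'

/-- If both adjacent napkins of diner `j ∈ l` are already claimed, `j` ends napkinless. -/
lemma becomes_napkinless (l : List (Fin n)) (st : Finset (Fin n) × Finset (Fin n))
    (j : Fin n) (hj : j ∈ l)
    (h1 : w.symm j ∈ st.1) (h2 : leftNapkin (w.symm j) ∈ st.1) :
    j ∈ (l.foldl (dstep σ w) st).2 := by
  revert hj h1 h2
  induction l generalizing st with
  | nil => intro hj _ _; simp at hj
  | cons a l ih =>
    intro hj h1 h2
    rcases eq_or_ne a j with rfl | hne
    · refine foldl_snd_subset l _ ?_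
      show a ∈ (dstep σ w st a).2
      unfold dstep
      dsimp only
      rw [if_neg, if_neg]
      · exact Finset.mem_insert_self _ _
      · cases hσ : σ a <;> simp [hσ] <;> assumption
      · cases hσ : σ a <;> simp [hσ] <;> assumption
    · have hj' : j ∈ l := (List.mem_cons.mp hj).resolve_left (fun hh => hne hh.symm)
      exact ih _ hj' (dstep_fst_subset st a h1) (dstep_fst_subset st a h2)

/-- The core bench lemma: three consecutive seats `s₁, s₂, s₃`, with a right-preferring
diner `A` at `s₁`, a left-preferring diner `B` at `s₃`, and a later-arriving diner `C`
in the middle seat `s₂`; then `C` is napkinless. -/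
lemma bench_napkinless (σ : Fin n → Bool) (w : Equiv.Perm (Fin n))
    (s₁ s₂ s₃ A B C : Fin n)
    (h2 : (s₂ : ℕ) = ((s₁ : ℕ) + 1) % n) (h3 : (s₃ : ℕ) = ((s₂ : ℕ) + 1) % n)
    (hA : w.symm A = s₁) (hC : w.symm C = s₂) (hB : w.symm B = s₃)
    (hσA : σ A = true) (hσB : σ B = false) (hAC : A < C) (hBC : B < C) :
    C ∈ napkinless σ w := by
  classical
  have hsplit : List.finRange n =
      (List.finRange n).take (C : ℕ) ++ C :: (List.finRange n).drop ((C : ℕ) + 1) := by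
    conv_lhs => rw [← List.take_append_drop (C : ℕ) (List.finRange n)]
    congr 1
    rw [List.drop_eq_getElem_cons (by simpa using C.isLt)]
    congr 1
    simp [List.getElem_finRange]
  set l1 := (List.finRange n).take (C : ℕ) with hl1
  have hmem : ∀ j : Fin n, j ∈ l1 ↔ (j : ℕ) < (C : ℕ) := fun j => mem_take_finRange
  -- napkin s₁ is claimed after processing l1
  have hs1 : s₁ ∈ (l1.foldl (dstep σ w) (∅, ∅)).1 := by
    refine claims l1 _ A s₁ ?_ ((hmem A).mpr hAC) (by simp) ?_
    · rw [hσA, if_pos rfl, hA]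
    · intro j' hj' hne
      constructor
      · intro hcon
        exact hne (w.symm.injective (by rw [hA, hcon]))
      · intro hcon
        have : (w.symm j' : ℕ) = ((s₁ : ℕ) + 1) % n := eq_succ_of_leftNapkin hcon.symm
        have : w.symm j' = s₂ := Fin.ext (by rw [this, h2])
        have : j' = C := w.symm.injective (by rw [this, hC])
        rw [this] at hj'
        exact absurd ((hmem C).mp hj') (lt_irrefl _)
  have hs2 : s₂ ∈ (l1.foldl (dstep σ w) (∅, ∅)).1 := by
    refine claims l1 _ B s₂ ?_ ((hmem B).mpr hBC) (by simp) ?_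
    · rw [hσB]
      simp only [Bool.false_eq_true, if_false]
      rw [hB, leftNapkin_of_succ h3]
    · intro j' hj' hne
      constructor
      · intro hcon
        have : j' = C := w.symm.injective (by rw [hC, hcon])
        rw [this] at hj'
        exact absurd ((hmem C).mp hj') (lt_irrefl _)
      · intro hcon
        have h4 : (w.symm j' : ℕ) = ((s₂ : ℕ) + 1) % n := eq_succ_of_leftNapkin hcon.symm
        have : w.symm j' = s₃ := Fin.ext (by rw [h4, h3])
        have : j' = B := w.symm.injective (by rw [this, hB])
        exact hne this
  -- now C becomes napkinless
  have hfold : napkinless σ w =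
      ((C :: (List.finRange n).drop ((C : ℕ) + 1)).foldl (dstep σ w)
        (l1.foldl (dstep σ w) (∅, ∅))).2 := by
    rw [napkinless, dine_eq_foldl]
    conv_lhs => rw [hsplit]
    rw [List.foldl_append]
  rw [hfold]
  refine becomes_napkinless _ _ C List.mem_cons_self ?_ ?_
  · rw [hC]; exact hs2
  · rw [hC, leftNapkin_of_succ h2]
    exact hs1

end Aux

/-! ### Existence of a permutation with prescribed values -/

lemma exists_perm_of_inj {ι : Type} [Fintype ι] [DecidableEq ι]
    (sf df : ι → Fin n) (hs : Function.Injective sf) (hd : Function.Injective df) :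
    ∃ w : Equiv.Perm (Fin n), ∀ i, w (sf i) = df i := by
  classical
  let e1 : ι ≃ ↑(Set.range sf) := Equiv.ofInjective sf hs
  let e2 : ι ≃ ↑(Set.range df) := Equiv.ofInjective df hd
  have hcard : Fintype.card ↑(Set.range sf)ᶜ = Fintype.card ↑(Set.range df)ᶜ := by
    rw [Fintype.card_compl_set, Fintype.card_compl_set,
      ← Fintype.card_congr e1, ← Fintype.card_congr e2]
  have ce : ↑(Set.range sf)ᶜ ≃ ↑(Set.range df)ᶜ := Fintype.equivOfCardEq hcard
  let inner : ↑(Set.range sf) ≃ ↑(Set.range df) := e1.symm.trans e2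
  refine ⟨((Equiv.sumCompl (· ∈ Set.range sf)).symm.trans
    ((inner.sumCongr ce).trans (Equiv.sumCompl (· ∈ Set.range df)))), fun i => ?_⟩
  simp only [Equiv.trans_apply]
  rw [Equiv.sumCompl_symm_apply_of_pos (p := (· ∈ Set.range sf)) (Set.mem_range_self i)]
  have hinner : inner ⟨sf i, Set.mem_range_self i⟩ = ⟨df i, Set.mem_range_self i⟩ := by
    show e2 (e1.symm ⟨sf i, Set.mem_range_self i⟩) = _
    have h1 : e1.symm ⟨sf i, Set.mem_range_self i⟩ = i := by
      apply e1.injective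
      rw [Equiv.apply_symm_apply]
      exact Subtype.ext rfl
    rw [h1]
    exact Subtype.ext rfl
  calc (Equiv.sumCompl (· ∈ Set.range df)) ((inner.sumCongr ce) (Sum.inl ⟨sf i, Set.mem_range_self i⟩))
      = (Equiv.sumCompl (· ∈ Set.range df)) (Sum.inl (inner ⟨sf i, Set.mem_range_self i⟩)) := rfl
    _ = (Equiv.sumCompl (· ∈ Set.range df)) (Sum.inl (⟨df i, Set.mem_range_self i⟩ :
          ↑(Set.range df))) := by rw [hinner]
    _ = df i := Equiv.sumCompl_apply_inl _

/-! ### Counting helpers -/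

section Counting
open Finset

lemma filter_not_le (s : Finset (Fin n)) (y : Fin n) :
    (s.filter fun x => ¬ x ≤ y) = s.filter fun x => y < x := by
  apply Finset.filter_congr
  intro x _
  simp [not_le]

lemma card_filter_le_add_card_filter_gt (s : Finset (Fin n)) (y : Fin n) :
    (s.filter fun x => x ≤ y).card + (s.filter fun x => y < x).card = s.card := by
  rw [← filter_not_le]
  exact Finset.card_filter_add_card_filter_not _

lemma card_univ_filter_le (y : Fin n) :
    (Finset.univ.filter fun x : Fin n => x ≤ y).card = (y : ℕ) + 1 := by
  have : (Finset.univ.filter fun x : Fin n => x ≤ y) = Finset.Iic y := by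
    ext x; simp
  rw [this, Fin.card_Iic]

lemma card_filter_fin_lt (k t : ℕ) :
    (Finset.univ.filter fun q : Fin k => (q : ℕ) < t).card = min k t := by
  rcases le_or_gt k t with hkt | htk
  · have : (Finset.univ.filter fun q : Fin k => (q : ℕ) < t) = Finset.univ := by
      ext q; simpa using lt_of_lt_of_le q.isLt hkt
    rw [this, Finset.card_univ, Fintype.card_fin, min_eq_left hkt]
  · have : (Finset.univ.filter fun q : Fin k => (q : ℕ) < t) = Finset.Iio ⟨t, htk⟩ := by
      ext q; simp [Fin.lt_def]
    rw [this, Fin.card_Iio, min_eq_right htk.le]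

/-- Rank identity for the order isomorphism of a finset. -/
lemma card_filter_le_rank (s : Finset (Fin n)) {m : ℕ} (hm : s.card = m) (i : Fin m) :
    (s.filter fun x => x ≤ (s.orderIsoOfFin hm i : Fin n)).card = (i : ℕ) + 1 := by
  have himg : (s.filter fun x => x ≤ (s.orderIsoOfFin hm i : Fin n)) =
      (Finset.Iic i).image (fun j => (s.orderIsoOfFin hm j : Fin n)) := by
    ext x
    simp only [Finset.mem_filter, Finset.mem_image, Finset.mem_Iic]
    constructor
    · rintro ⟨hxs, hxle⟩
      refine ⟨(s.orderIsoOfFin hm).symm ⟨x, hxs⟩, ?_, ?_⟩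
      · rw [← OrderIso.le_iff_le (s.orderIsoOfFin hm), OrderIso.apply_symm_apply]
        exact hxle
      · rw [OrderIso.apply_symm_apply]
    · rintro ⟨j, hji, rfl⟩
      refine ⟨(s.orderIsoOfFin hm j).2, ?_⟩
      exact_mod_cast (s.orderIsoOfFin hm).le_iff_le.mpr hji
  have hinj : Function.Injective (fun j : Fin m => ((s.orderIsoOfFin hm) j : Fin n)) :=
    fun a b hab => (s.orderIsoOfFin hm).injective (Subtype.coe_injective hab)
  rw [himg, Finset.card_image_of_injective _ hinj, Fin.card_Iic]

/-- If `g` enumerates the `k` smallest elements of `s` (by ranks), then the number of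
elements of its image below a threshold `y` is `min k` (number of elements of `s` below `y`). -/
lemma card_image_le_of_rank {k : ℕ} (s : Finset (Fin n)) (g : Fin k → Fin n)
    (hg : ∀ p, g p ∈ s)
    (hrank : ∀ p : Fin k, (s.filter fun x => x ≤ g p).card = (p : ℕ) + 1) (y : Fin n) :
    ((Finset.univ.image g).filter fun x => x ≤ y).card =
      min k ((s.filter fun x => x ≤ y).card) := by
  have hginj : Function.Injective g := by
    intro p p' hpp'
    have := hrank p
    rw [hpp', hrank p'] at this
    exact Fin.ext (by omega)
  set t := (s.filter fun x => x ≤ y).card with ht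
  have hiff : ∀ p : Fin k, g p ≤ y ↔ (p : ℕ) < t := by
    intro p
    constructor
    · intro hle
      have hsub : (s.filter fun x => x ≤ g p) ⊆ s.filter fun x => x ≤ y := by
        intro x hx
        rw [Finset.mem_filter] at hx ⊢
        exact ⟨hx.1, le_trans hx.2 hle⟩
      have := Finset.card_le_card hsub
      rw [hrank p] at this
      omega
    · intro hlt
      by_contra hcon
      push_neg at hcon
      have hsub : (s.filter fun x => x ≤ y) ⊆
          (s.filter fun x => x ≤ g p).erase (g p) := by
        intro x hx
        rw [Finset.mem_filter] at hx
        rw [Finset.mem_erase, Finset.mem_filter]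
        refine ⟨?_, hx.1, le_of_lt (lt_of_le_of_lt hx.2 hcon)⟩
        intro hxe
        rw [hxe] at hx
        exact absurd hx.2 (not_le.mpr hcon)
      have := Finset.card_le_card hsub
      rw [Finset.card_erase_of_mem, hrank p] at this
      · omega
      · rw [Finset.mem_filter]; exact ⟨hg p, le_refl _⟩
  have himg : ((Finset.univ.image g).filter fun x => x ≤ y) =
      (Finset.univ.filter fun p : Fin k => (p : ℕ) < t).image g := by
    ext x
    simp only [Finset.mem_filter, Finset.mem_image, Finset.mem_univ, true_and]
    constructor
    · rintro ⟨⟨p, rfl⟩, hle⟩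
      exact ⟨p, (hiff p).mp hle, rfl⟩
    · rintro ⟨p, hp, rfl⟩
      exact ⟨⟨p, rfl⟩, (hiff p).mpr hp⟩
  rw [himg, Finset.card_image_of_injective _ hginj, card_filter_fin_lt]

/-- The Hall-type counting bound. -/
lemma hall_aux (X Y P Q : Finset (Fin n)) (k p h : ℕ) (b : Fin n)
    (hXY : ∀ x : Fin n, x ∈ X ∨ x ∈ Y) (hdisjXY : ∀ x, ¬(x ∈ X ∧ x ∈ Y))
    (hPX : P ⊆ X) (hQY : Q ⊆ Y) (hPcard : P.card = k) (hQcard : Q.card = k)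
    (hT : (X.filter fun x => x ≤ b).card = p + 1)
    (hF : p + 1 ≤ (Y.filter fun x => x ≤ b).card)
    (hPle : (P.filter fun x => x ≤ b).card = min k ((X.filter fun x => x ≤ b).card))
    (hQle : (Q.filter fun x => x ≤ b).card = min k ((Y.filter fun x => x ≤ b).card))
    (hpk : p < k)
    (hdr : ((Y.filter fun x => x ≤ b).card : ℤ) ≤
      ((X.filter fun x => x ≤ b).card : ℤ) + h - 1)
    (h2kh : 2 * k + h ≤ n) (h3k : 3 * k ≤ n) :
    k - p ≤ (((Finset.univ \ (P ∪ Q)).filter fun x => b < x)).card := by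
  set F := (Y.filter fun x => x ≤ b).card with hFdef
  have hdisjPQ : Disjoint P Q := by
    rw [Finset.disjoint_left]
    intro x hxP hxQ
    exact hdisjXY x ⟨hPX hxP, hQY hxQ⟩
  -- partition of the ≤ b prefix
  have hpart : (b : ℕ) + 1 = (p + 1) + F := by
    rw [← hT, hFdef, ← card_univ_filter_le b]
    rw [← Finset.card_union_of_disjoint]
    · congr 1
      ext x
      simp only [Finset.mem_filter, Finset.mem_union, Finset.mem_univ, true_and]
      constructor
      · intro hx
        rcases hXY x with hX | hY
        · exact Or.inl ⟨hX, hx⟩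
        · exact Or.inr ⟨hY, hx⟩
      · rintro (⟨_, hx⟩ | ⟨_, hx⟩) <;> exact hx
    · rw [Finset.disjoint_left]
      intro x hx hx'
      rw [Finset.mem_filter] at hx hx'
      exact hdisjXY x ⟨hx.1, hx'.1⟩
  -- counting above b
  have hsplit : ∀ s : Finset (Fin n),
      (s.filter fun x => b < x).card = s.card - (s.filter fun x => x ≤ b).card := by
    intro s
    have := card_filter_le_add_card_filter_gt s b
    omega
  have hPQuniv : P ∪ Q ⊆ Finset.univ := Finset.subset_univ _
  have hWfilter : ((Finset.univ \ (P ∪ Q)).filter fun x => b < x) =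
      (Finset.univ.filter fun x => b < x) \ ((P ∪ Q).filter fun x => b < x) := by
    ext x
    simp only [Finset.mem_filter, Finset.mem_sdiff, Finset.mem_union, Finset.mem_univ,
      true_and]
    tauto
  have hWcard : ((Finset.univ \ (P ∪ Q)).filter fun x => b < x).card =
      (Finset.univ.filter fun x => b < x).card - ((P ∪ Q).filter fun x => b < x).card := by
    rw [hWfilter]
    apply Finset.card_sdiff_of_subset
    apply Finset.filter_subset_filter
    exact hPQuniv
  have hPQf : ((P ∪ Q).filter fun x => b < x).card =
      (P.filter fun x => b < x).card + (Q.filter fun x => b < x).card := by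
    rw [Finset.filter_union]
    apply Finset.card_union_of_disjoint
    exact Finset.disjoint_filter_filter hdisjPQ
  have huniv : (Finset.univ.filter fun x => b < x).card = n - ((b : ℕ) + 1) := by
    rw [hsplit, card_univ_filter_le, Finset.card_univ, Fintype.card_fin]
  have hPb := hsplit P
  have hQb := hsplit Q
  rw [hPle, hT] at hPb
  rw [hQle] at hQb
  have hbn : (b : ℕ) < n := b.isLt
  have hdr' : F ≤ p + h := by omega
  have hminP : min k (p + 1) = p + 1 := min_eq_right (by omega)
  rw [hminP] at hPb
  rw [hWcard, hPQf, huniv, hPb, hQb, hPcard, hQcard]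
  rcases le_total k F with hc | hc
  · rw [min_eq_left hc]
    omega
  · rw [min_eq_right hc]
    omega

end Counting

/-! ### Combinatorial lemma -/

lemma filter_le_split (σ : Fin n → Bool) (b : Fin n) :
    ((Finset.univ.filter fun x : Fin n => σ x).filter fun x => x ≤ b).card =
      (Finset.univ.filter fun j : Fin n => (j : ℕ) < (b : ℕ) ∧ σ j).card +
        (if σ b then 1 else 0) := by
  classical
  rcases hb : σ b with _ | _
  · simp only [Bool.false_eq_true, if_false, add_zero]
    congr 1
    ext x
    simp only [Finset.mem_filter, Finset.mem_univ, true_and]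
    constructor
    · rintro ⟨hσx, hxb⟩
      refine ⟨?_, hσx⟩
      rcases lt_or_eq_of_le hxb with hlt | heq
      · exact hlt
      · simp [heq, hb] at hσx
    · rintro ⟨hlt, hσx⟩
      exact ⟨hσx, le_of_lt hlt⟩
  · simp only [if_true]
    have hset : ((Finset.univ.filter fun x : Fin n => σ x).filter fun x => x ≤ b) =
        insert b (Finset.univ.filter fun j : Fin n => (j : ℕ) < (b : ℕ) ∧ σ j) := by
      ext x
      simp only [Finset.mem_filter, Finset.mem_univ, true_and, Finset.mem_insert]
      constructor
      · rintro ⟨hσx, hxb⟩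
        rcases lt_or_eq_of_le hxb with hlt | heq
        · exact Or.inr ⟨hlt, hσx⟩
        · exact Or.inl (Fin.ext (by exact_mod_cast congrArg Fin.val heq))
      · rintro (rfl | ⟨hlt, hσx⟩)
        · exact ⟨hb, le_refl _⟩
        · exact ⟨hσx, le_of_lt hlt⟩
    rw [hset, Finset.card_insert_of_notMem]
    simp only [Finset.mem_filter, Finset.mem_univ, true_and, not_and]
    intro hcon
    exact absurd hcon (lt_irrefl _)

lemma filter_le_split_not (σ : Fin n → Bool) (b : Fin n) :
    ((Finset.univ.filter fun x : Fin n => ¬ σ x).filter fun x => x ≤ b).card =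
      (Finset.univ.filter fun j : Fin n => (j : ℕ) < (b : ℕ) ∧ ¬ σ j).card +
        (if σ b then 0 else 1) := by
  classical
  rcases hb : σ b with _ | _
  · simp only [if_neg (show ¬ (false = true) by simp)]
    have hset : ((Finset.univ.filter fun x : Fin n => ¬ σ x).filter fun x => x ≤ b) =
        insert b (Finset.univ.filter fun j : Fin n => (j : ℕ) < (b : ℕ) ∧ ¬ σ j) := by
      ext x
      simp only [Finset.mem_filter, Finset.mem_univ, true_and, Finset.mem_insert]
      constructor
      · rintro ⟨hσx, hxb⟩
        rcases lt_or_eq_of_le hxb with hlt | heq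
        · exact Or.inr ⟨hlt, hσx⟩
        · exact Or.inl (Fin.ext (by exact_mod_cast congrArg Fin.val heq))
      · rintro (rfl | ⟨hlt, hσx⟩)
        · exact ⟨by simp [hb], le_refl _⟩
        · exact ⟨hσx, le_of_lt hlt⟩
    rw [hset, Finset.card_insert_of_notMem]
    simp only [Finset.mem_filter, Finset.mem_univ, true_and, not_and]
    intro hcon
    exact absurd hcon (lt_irrefl _)
  · rw [if_pos rfl, add_zero]
    congr 1
    ext x
    simp only [Finset.mem_filter, Finset.mem_univ, true_and]
    constructor
    · rintro ⟨hσx, hxb⟩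
      refine ⟨?_, hσx⟩
      rcases lt_or_eq_of_le hxb with hlt | heq
      · exact hlt
      · rw [heq] at hσx; exact absurd hb hσx
    · rintro ⟨hlt, hσx⟩
      exact ⟨hσx, le_of_lt hlt⟩

/-- The combinatorial heart: given the drift bounds, there are `k` disjoint triples
`(A p, B p, C p)` with `σ (A p) = true`, `σ (B p) = false`, and `C p` later than both. -/
lemma exists_triples (σ : Fin n → Bool) (h k : ℕ)
    (hdrift : ∀ i ≤ n, ((Finset.univ.filter fun j : Fin n => (j : ℕ) < i ∧ σ j).card : ℤ) -
      (Finset.univ.filter fun j : Fin n => (j : ℕ) < i ∧ ¬ σ j).card ∈ Set.Icc (-(h:ℤ)) h)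
    (hk3 : 3 * k ≤ n) (hk2 : 2 * k + h ≤ n) :
    ∃ A B C : Fin k → Fin n,
      (∀ p, σ (A p) = true) ∧ (∀ p, σ (B p) = false) ∧
      (∀ p, A p < C p) ∧ (∀ p, B p < C p) ∧
      Function.Injective A ∧ Function.Injective B ∧ Function.Injective C ∧
      (∀ p p', A p ≠ B p' ∧ A p ≠ C p' ∧ B p ≠ C p') := by
  classical
  set Tr := Finset.univ.filter (fun j : Fin n => σ j) with hTrdef
  set Fa := Finset.univ.filter (fun j : Fin n => ¬ σ j) with hFadef
  have hTrFa : Tr.card + Fa.card = n := by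
    rw [hTrdef, hFadef, Finset.card_filter_add_card_filter_not, Finset.card_univ,
      Fintype.card_fin]
  have hd := hdrift n le_rfl
  have hTn : (Finset.univ.filter fun j : Fin n => (j : ℕ) < n ∧ σ j) = Tr := by
    rw [hTrdef]
    apply Finset.filter_congr
    intro x _
    simp [x.isLt]
  have hFn : (Finset.univ.filter fun j : Fin n => (j : ℕ) < n ∧ ¬ σ j) = Fa := by
    rw [hFadef]
    apply Finset.filter_congr
    intro x _
    simp [x.isLt]
  rw [hTn, hFn, Set.mem_Icc] at hd
  obtain ⟨hd1, hd2⟩ := hd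
  have hkT : k ≤ Tr.card := by omega
  have hkF : k ≤ Fa.card := by omega
  let eT := Tr.orderIsoOfFin rfl
  let A : Fin k → Fin n := fun p => (eT ⟨p, lt_of_lt_of_le p.isLt hkT⟩ : Fin n)
  let eB := Fa.orderIsoOfFin rfl
  let B : Fin k → Fin n := fun p => (eB ⟨p, lt_of_lt_of_le p.isLt hkF⟩ : Fin n)
  have hAmem : ∀ p, A p ∈ Tr := fun p => (eT _).2
  have hBmem : ∀ p, B p ∈ Fa := fun p => (eB _).2
  have hσA : ∀ p, σ (A p) = true := by
    intro p
    have := hAmem p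
    rw [hTrdef, Finset.mem_filter] at this
    simpa using this.2
  have hσB : ∀ p, σ (B p) = false := by
    intro p
    have := hBmem p
    rw [hFadef, Finset.mem_filter] at this
    simpa using this.2
  have hArank : ∀ p : Fin k, (Tr.filter fun x => x ≤ A p).card = (p : ℕ) + 1 :=
    fun p => card_filter_le_rank Tr rfl _
  have hBrank : ∀ p : Fin k, (Fa.filter fun x => x ≤ B p).card = (p : ℕ) + 1 :=
    fun p => card_filter_le_rank Fa rfl _
  have hAinj : Function.Injective A := by
    intro p p' hpp'
    have h1 := hArank p
    rw [hpp', hArank p'] at h1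
    exact Fin.ext (by omega)
  have hBinj : Function.Injective B := by
    intro p p' hpp'
    have h1 := hBrank p
    rw [hpp', hBrank p'] at h1
    exact Fin.ext (by omega)
  let P := Finset.univ.image A
  let Q := Finset.univ.image B
  have hPcard : P.card = k := by
    rw [show P = Finset.univ.image A from rfl, Finset.card_image_of_injective _ hAinj,
      Finset.card_univ, Fintype.card_fin]
  have hQcard : Q.card = k := by
    rw [show Q = Finset.univ.image B from rfl, Finset.card_image_of_injective _ hBinj,
      Finset.card_univ, Fintype.card_fin]
  have hdisjXY : ∀ x : Fin n, ¬(x ∈ Tr ∧ x ∈ Fa) := by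
    rintro x ⟨h1, h2⟩
    rw [hTrdef, Finset.mem_filter] at h1
    rw [hFadef, Finset.mem_filter] at h2
    exact h2.2 h1.2
  have hXY : ∀ x : Fin n, x ∈ Tr ∨ x ∈ Fa := by
    intro x
    by_cases hσ : σ x = true
    · left; rw [hTrdef, Finset.mem_filter]; exact ⟨Finset.mem_univ _, hσ⟩
    · right; rw [hFadef, Finset.mem_filter]; exact ⟨Finset.mem_univ _, hσ⟩
  have hPX : P ⊆ Tr := by
    intro x hx
    obtain ⟨p, _, rfl⟩ := Finset.mem_image.mp hx
    exact hAmem p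
  have hQY : Q ⊆ Fa := by
    intro x hx
    obtain ⟨p, _, rfl⟩ := Finset.mem_image.mp hx
    exact hBmem p
  have hdisjPQ : Disjoint P Q := by
    rw [Finset.disjoint_left]
    intro x h1 h2
    exact hdisjXY x ⟨hPX h1, hQY h2⟩
  let W := Finset.univ \ (P ∪ Q)
  have hWcard : W.card = n - 2 * k := by
    rw [show W = Finset.univ \ (P ∪ Q) from rfl, Finset.card_sdiff_of_subset (Finset.subset_univ _),
      Finset.card_union_of_disjoint hdisjPQ, hPcard, hQcard, Finset.card_univ,
      Fintype.card_fin]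
    omega
  have hkW : k ≤ W.card := by omega
  let eW := W.orderIsoOfFin rfl
  let C : Fin k → Fin n := fun p => (eW ⟨W.card - k + (p : ℕ), by have := p.isLt; omega⟩ : Fin n)
  have hCmem : ∀ p, C p ∈ W := fun p => (eW _).2
  have hCrank : ∀ p : Fin k, (W.filter fun x => x ≤ C p).card = W.card - k + (p : ℕ) + 1 :=
    fun p => card_filter_le_rank W rfl _
  have hCinj : Function.Injective C := by
    intro p p' hpp'
    have h1 := hCrank p
    rw [hpp', hCrank p'] at h1
    exact Fin.ext (by omega)
  have hCabove : ∀ p : Fin k, (W.filter fun x => C p < x).card = k - (p : ℕ) - 1 := by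
    intro p
    have hs := card_filter_le_add_card_filter_gt W (C p)
    rw [hCrank p] at hs
    have := p.isLt
    omega
  have hCnotPQ : ∀ p, C p ∉ P ∪ Q := by
    intro p
    have := hCmem p
    rw [show W = Finset.univ \ (P ∪ Q) from rfl, Finset.mem_sdiff] at this
    exact this.2
  have hkey : ∀ p : Fin k, max (A p) (B p) < C p := by
    intro p
    have hple := p.isLt
    by_contra hcon
    push_neg at hcon
    rcases le_total (A p) (B p) with hab | hab
    · -- the later of the pair is B p
      rw [max_eq_right hab] at hcon
      have hF' : (p : ℕ) + 1 ≤ (Tr.filter fun x => x ≤ B p).card := by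
        have hsub : (Tr.filter fun x => x ≤ A p) ⊆ Tr.filter fun x => x ≤ B p := by
          intro x hx; rw [Finset.mem_filter] at hx ⊢; exact ⟨hx.1, le_trans hx.2 hab⟩
        have hcc := Finset.card_le_card hsub
        rw [hArank p] at hcc
        exact hcc
      have hdrb : ((Tr.filter fun x => x ≤ B p).card : ℤ) ≤
          ((Fa.filter fun x => x ≤ B p).card : ℤ) + h - 1 := by
        have hdd := hdrift ((B p : ℕ)) (le_of_lt (B p).isLt)
        rw [Set.mem_Icc] at hdd
        have h1 := filter_le_split σ (B p)
        have h2 := filter_le_split_not σ (B p)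
        rw [hσB p] at h1 h2
        simp only [Bool.false_eq_true, if_false, add_zero] at h1 h2
        rw [← hTrdef] at h1
        rw [← hFadef] at h2
        omega
      have hhall := hall_aux Fa Tr Q P k (p : ℕ) h (B p)
        (fun x => (hXY x).elim Or.inr Or.inl)
        (fun x hx => hdisjXY x ⟨hx.2, hx.1⟩)
        hQY hPX hQcard hPcard (hBrank p) hF'
        (card_image_le_of_rank Fa B hBmem hBrank (B p))
        (card_image_le_of_rank Tr A hAmem hArank (B p))
        hple hdrb hk2 hk3
      rw [Finset.union_comm] at hhall
      have hsub : ((Finset.univ \ (P ∪ Q)).filter fun x => B p < x) ⊆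
          (Finset.univ \ (P ∪ Q)).filter fun x => C p < x := by
        intro x hx; rw [Finset.mem_filter] at hx ⊢; exact ⟨hx.1, lt_of_le_of_lt hcon hx.2⟩
      have hcc := Finset.card_le_card hsub
      have hca := hCabove p
      rw [show W = Finset.univ \ (P ∪ Q) from rfl] at hca
      omega
    · -- the later of the pair is A p
      rw [max_eq_left hab] at hcon
      have hF' : (p : ℕ) + 1 ≤ (Fa.filter fun x => x ≤ A p).card := by
        have hsub : (Fa.filter fun x => x ≤ B p) ⊆ Fa.filter fun x => x ≤ A p := by
          intro x hx; rw [Finset.mem_filter] at hx ⊢; exact ⟨hx.1, le_trans hx.2 hab⟩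
        have hcc := Finset.card_le_card hsub
        rw [hBrank p] at hcc
        exact hcc
      have hdrb : ((Fa.filter fun x => x ≤ A p).card : ℤ) ≤
          ((Tr.filter fun x => x ≤ A p).card : ℤ) + h - 1 := by
        have hdd := hdrift ((A p : ℕ)) (le_of_lt (A p).isLt)
        rw [Set.mem_Icc] at hdd
        have h1 := filter_le_split σ (A p)
        have h2 := filter_le_split_not σ (A p)
        rw [hσA p] at h1 h2
        simp only [if_true, add_zero] at h1 h2
        rw [← hTrdef] at h1
        rw [← hFadef] at h2
        omega
      have hhall := hall_aux Tr Fa P Q k (p : ℕ) h (A p)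
        hXY hdisjXY
        hPX hQY hPcard hQcard (hArank p) hF'
        (card_image_le_of_rank Tr A hAmem hArank (A p))
        (card_image_le_of_rank Fa B hBmem hBrank (A p))
        hple hdrb hk2 hk3
      have hsub : ((Finset.univ \ (P ∪ Q)).filter fun x => A p < x) ⊆
          (Finset.univ \ (P ∪ Q)).filter fun x => C p < x := by
        intro x hx; rw [Finset.mem_filter] at hx ⊢; exact ⟨hx.1, lt_of_le_of_lt hcon hx.2⟩
      have hcc := Finset.card_le_card hsub
      have hca := hCabove p
      rw [show W = Finset.univ \ (P ∪ Q) from rfl] at hca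
      omega
  refine ⟨A, B, C, hσA, hσB, ?_, ?_, hAinj, hBinj, hCinj, ?_⟩
  · intro p; exact lt_of_le_of_lt (le_max_left _ _) (hkey p)
  · intro p; exact lt_of_le_of_lt (le_max_right _ _) (hkey p)
  · intro p p'
    refine ⟨?_, ?_, ?_⟩
    · intro he
      have h1 := hσA p
      rw [he, hσB p'] at h1
      cases h1
    · intro he
      apply hCnotPQ p'
      rw [← he]
      exact Finset.mem_union_left _ (Finset.mem_image_of_mem A (Finset.mem_univ p))
    · intro he
      apply hCnotPQ p'
      rw [← he]
      exact Finset.mem_union_right _ (Finset.mem_image_of_mem B (Finset.mem_univ p))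

/-- Assembling: if the permutation seats each triple on a block of three consecutive
seats (left `A p`, middle `C p`, right `B p`), then there are at least `k` napkinless
diners. -/
lemma assemble (σ : Fin n → Bool) (k : ℕ) (A B C : Fin k → Fin n) (t : Fin k → ℕ)
    (hσA : ∀ p, σ (A p) = true) (hσB : ∀ p, σ (B p) = false)
    (hAC : ∀ p, A p < C p) (hBC : ∀ p, B p < C p)
    (hCinj : Function.Injective C)
    (w : Equiv.Perm (Fin n)) (hn : 0 < n)
    (hw0 : ∀ p, w ⟨(t p + 0) % n, Nat.mod_lt _ hn⟩ = A p)
    (hw1 : ∀ p, w ⟨(t p + 1) % n, Nat.mod_lt _ hn⟩ = C p)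
    (hw2 : ∀ p, w ⟨(t p + 2) % n, Nat.mod_lt _ hn⟩ = B p) :
    k ≤ nu σ w := by
  classical
  have hmem : ∀ p, C p ∈ napkinless σ w := by
    intro p
    refine bench_napkinless σ w ⟨(t p + 0) % n, Nat.mod_lt _ hn⟩
      ⟨(t p + 1) % n, Nat.mod_lt _ hn⟩ ⟨(t p + 2) % n, Nat.mod_lt _ hn⟩
      (A p) (B p) (C p) ?_ ?_ ?_ ?_ ?_ (hσA p) (hσB p) (hAC p) (hBC p)
    · show (t p + 1) % n = ((t p + 0) % n + 1) % n
      conv_rhs => rw [Nat.mod_add_mod]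
    · show (t p + 2) % n = ((t p + 1) % n + 1) % n
      conv_rhs => rw [Nat.mod_add_mod]
    · exact (Equiv.symm_apply_eq w).mpr (hw0 p).symm
    · exact (Equiv.symm_apply_eq w).mpr (hw1 p).symm
    · exact (Equiv.symm_apply_eq w).mpr (hw2 p).symm
  have hsub : Finset.univ.image C ⊆ napkinless σ w := by
    intro x hx
    obtain ⟨p, _, rfl⟩ := Finset.mem_image.mp hx
    exact hmem p
  have := Finset.card_le_card hsub
  rw [Finset.card_image_of_injective _ hCinj, Finset.card_univ, Fintype.card_fin] at this
  exact this

/-- Seat of the `r`-th member of bench `p`. -/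
def benchSeat {K : ℕ} (t : Fin K → ℕ) (hn0 : 0 < n) : Fin K × Fin 3 → Fin n :=
  fun x => ⟨(t x.1 + (x.2 : ℕ)) % n, Nat.mod_lt _ hn0⟩

/-- Diner in the `r`-th seat of bench `p` (left `A`, middle `C`, right `B`). -/
def benchDiner {K : ℕ} (A B C : Fin K → Fin n) : Fin K × Fin 3 → Fin n :=
  fun x => if (x.2 : ℕ) = 0 then A x.1 else if (x.2 : ℕ) = 1 then C x.1 else B x.1

lemma build_perm (σ : Fin n → Bool) (K : ℕ) (A B C : Fin K → Fin n) (t : Fin K → ℕ)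
    (hn0 : 0 < n)
    (hσA : ∀ p, σ (A p) = true) (hσB : ∀ p, σ (B p) = false)
    (hAC : ∀ p, A p < C p) (hBC : ∀ p, B p < C p)
    (hAinj : Function.Injective A) (hBinj : Function.Injective B)
    (hCinj : Function.Injective C)
    (hdist : ∀ p p', A p ≠ B p' ∧ A p ≠ C p' ∧ B p ≠ C p')
    (htinj : ∀ (p p' : Fin K) (r r' : ℕ), r < 3 → r' < 3 →
      (t p + r) % n = (t p' + r') % n → p = p' ∧ r = r')
    (hseat0 : ∀ (p : Fin K) (r : ℕ), r < 3 → (t p + r) % n = 0 →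
      (((if r = 0 then A p else if r = 1 then C p else B p) : Fin n) : ℕ) = 0)
    (hdiner0 : ∀ p : Fin K, ((A p : ℕ) = 0 ∨ (B p : ℕ) = 0 ∨ (C p : ℕ) = 0) →
      ∃ (p' : Fin K) (r : ℕ), r < 3 ∧ (t p' + r) % n = 0) :
    ∃ w : Equiv.Perm (Fin n), IsSeating w ∧ K ≤ nu σ w := by
  classical
  have hSinj : Function.Injective (benchSeat (n := n) t hn0) := by
    intro x y hxy
    have hval : (t x.1 + (x.2 : ℕ)) % n = (t y.1 + (y.2 : ℕ)) % n := congrArg Fin.val hxy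
    obtain ⟨hp, hr⟩ := htinj _ _ _ _ x.2.isLt y.2.isLt hval
    exact Prod.ext hp (Fin.ext hr)
  have hDinj : Function.Injective (benchDiner (n := n) A B C) := by
    rintro ⟨p, r⟩ ⟨p', r'⟩ hxy
    fin_cases r <;> fin_cases r' <;>
      simp only [benchDiner, Fin.isValue, Fin.val_zero, Fin.val_one, Fin.val_two,
        if_true, if_false, reduceIte] at hxy <;>
      first
        | (exact Prod.ext (hAinj hxy) rfl)
        | (exact Prod.ext (hBinj hxy) rfl)
        | (exact Prod.ext (hCinj hxy) rfl)
        | (exact absurd hxy (hdist p p').1)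
        | (exact absurd hxy (hdist p p').2.1)
        | (exact absurd hxy.symm (hdist p' p).1)
        | (exact absurd hxy.symm (hdist p' p).2.1)
        | (exact absurd hxy.symm (hdist p' p).2.2)
        | (exact absurd hxy (hdist p p').2.2)
  by_cases hex : ∃ x : Fin K × Fin 3, (t x.1 + (x.2 : ℕ)) % n = 0
  · obtain ⟨w, hw⟩ := exists_perm_of_inj (benchSeat (n := n) t hn0)
      (benchDiner (n := n) A B C) hSinj hDinj
    refine ⟨w, ?_, ?_⟩
    · intro i hi
      obtain ⟨⟨p, r⟩, hx⟩ := hex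
      have hiS : i = benchSeat (n := n) t hn0 (p, r) := Fin.ext (by rw [hi]; exact hx.symm)
      rw [hiS, hw (p, r)]
      fin_cases r
      · exact hseat0 p 0 (by norm_num) hx
      · exact hseat0 p 1 (by norm_num) hx
      · exact hseat0 p 2 (by norm_num) hx
    · refine assemble σ K A B C t hσA hσB hAC hBC hCinj w hn0 ?_ ?_ ?_
      · exact fun p => hw (p, 0)
      · exact fun p => hw (p, 1)
      · exact fun p => hw (p, 2)
  · push_neg at hex
    obtain ⟨w, hw⟩ := exists_perm_of_inj
      (Sum.elim (benchSeat (n := n) t hn0) (fun _ : Unit => ⟨0, hn0⟩))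
      (Sum.elim (benchDiner (n := n) A B C) (fun _ : Unit => ⟨0, hn0⟩))
      (by
        rintro (x | u) (y | v) hxy
        · exact congrArg Sum.inl (hSinj hxy)
        · exact absurd (congrArg Fin.val hxy) (hex x)
        · exact absurd (congrArg Fin.val hxy.symm) (hex y)
        · cases u; cases v; rfl)
      (by
        rintro (⟨p, r⟩ | u) (⟨p', r'⟩ | v) hxy
        · exact congrArg Sum.inl (hDinj hxy)
        · exfalso
          have hval : (benchDiner (n := n) A B C (p, r) : ℕ) = 0 := congrArg Fin.val hxy
          have h0 : (A p : ℕ) = 0 ∨ (B p : ℕ) = 0 ∨ (C p : ℕ) = 0 := by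
            fin_cases r <;> simp [benchDiner] at hval <;> tauto
          obtain ⟨p'', r'', hr3, h00⟩ := hdiner0 p h0
          exact absurd h00 (hex (p'', ⟨r'', hr3⟩))
        · exfalso
          have hval : (benchDiner (n := n) A B C (p', r') : ℕ) = 0 :=
            congrArg Fin.val hxy.symm
          have h0 : (A p' : ℕ) = 0 ∨ (B p' : ℕ) = 0 ∨ (C p' : ℕ) = 0 := by
            fin_cases r' <;> simp [benchDiner] at hval <;> tauto
          obtain ⟨p'', r'', hr3, h00⟩ := hdiner0 p' h0
          exact absurd h00 (hex (p'', ⟨r'', hr3⟩))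
        · cases u; cases v; rfl)
    refine ⟨w, ?_, ?_⟩
    · intro i hi
      have hiS : i = (⟨0, hn0⟩ : Fin n) := Fin.ext hi
      rw [hiS]
      have h2 : w (⟨0, hn0⟩ : Fin n) = (⟨0, hn0⟩ : Fin n) := hw (Sum.inr ())
      rw [h2]
    · refine assemble σ K A B C t hσA hσB hAC hBC hCinj w hn0 ?_ ?_ ?_
      · exact fun p => hw (Sum.inl (p, 0))
      · exact fun p => hw (Sum.inl (p, 1))
      · exact fun p => hw (Sum.inl (p, 2))

/-! ### Main theorem -/

/-- With `q = ⌊n/3⌋` and `h = max(h(σ), h(-σ))`, we have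
`ν_max(σ) ≥ min{q, ⌊(n-h)/2⌋}`; i.e. some seating order produces at least that many
napkinless diners. -/
theorem statement8 (n : ℕ) (hn : 1 ≤ n) (q : ℕ) (hq : q = n / 3)
    (σ : Fin n → Bool) (h : ℕ) (hmax : h = max (drift σ) (drift fun j => !σ j)) :
    min q ((n - h) / 2) ≤ nuMax σ ∧
    ∃ w : Equiv.Perm (Fin n), IsSeating w ∧ min q ((n - h) / 2) ≤ nu σ w := by
  classical
  have hn0 : 0 < n := hn
  set K := min q ((n - h) / 2) with hK
  suffices hmain : ∃ w : Equiv.Perm (Fin n), IsSeating w ∧ K ≤ nu σ w by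
    obtain ⟨w, hws, hnu⟩ := hmain
    have hle : nu σ w ≤ nuMax σ := Finset.le_sup (f := nu σ) (by
      rw [Finset.mem_filter]; exact ⟨Finset.mem_univ _, hws⟩)
    exact ⟨le_trans hnu hle, w, hws, hnu⟩
  rcases Nat.eq_zero_or_pos K with hK0 | hKpos
  · refine ⟨1, ?_, ?_⟩
    · intro i hi
      simpa using hi
    · rw [hK0]; exact Nat.zero_le _
  have hkq : K ≤ q := min_le_left _ _
  have hk2' : K ≤ (n - h) / 2 := min_le_right _ _
  have h33 : n / 3 * 3 ≤ n := Nat.div_mul_le_self n 3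
  have h22 : (n - h) / 2 * 2 ≤ n - h := Nat.div_mul_le_self _ _
  have hk3 : 3 * K ≤ n := by omega
  have hk2 : 2 * K + h ≤ n := by omega
  have hdrift : ∀ i ≤ n,
      ((Finset.univ.filter fun j : Fin n => (j : ℕ) < i ∧ σ j).card : ℤ) -
      (Finset.univ.filter fun j : Fin n => (j : ℕ) < i ∧ ¬ σ j).card ∈
        Set.Icc (-(h:ℤ)) h := by
    intro i hi
    have hmem : i ∈ Finset.range (n + 1) := Finset.mem_range.mpr (by omega)
    have hsum1 : (∑ j ∈ Finset.univ.filter (fun j : Fin n => (j : ℕ) < i), sign (σ j)) =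
        ((Finset.univ.filter fun j : Fin n => (j : ℕ) < i ∧ σ j).card : ℤ) -
        ((Finset.univ.filter fun j : Fin n => (j : ℕ) < i ∧ ¬ σ j).card : ℤ) := by
      rw [← Finset.sum_filter_add_sum_filter_not
        (Finset.univ.filter fun j : Fin n => (j : ℕ) < i) (fun j => σ j = true)]
      rw [Finset.filter_filter, Finset.filter_filter]
      have e1 : ∀ j ∈ (Finset.univ.filter fun j : Fin n => (j : ℕ) < i ∧ σ j = true),
          sign (σ j) = 1 := by
        intro j hj
        rw [Finset.mem_filter] at hj
        simp [sign, hj.2.2]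
      have e2 : ∀ j ∈ (Finset.univ.filter fun j : Fin n => (j : ℕ) < i ∧ ¬ σ j = true),
          sign (σ j) = -1 := by
        intro j hj
        rw [Finset.mem_filter] at hj
        simp [sign, hj.2.2]
      rw [Finset.sum_congr rfl e1, Finset.sum_congr rfl e2, Finset.sum_const,
        Finset.sum_const]
      push_cast
      ring
    have hsum2 : (∑ j ∈ Finset.univ.filter (fun j : Fin n => (j : ℕ) < i), sign (!σ j)) =
        - (∑ j ∈ Finset.univ.filter (fun j : Fin n => (j : ℕ) < i), sign (σ j)) := by
      rw [← Finset.sum_neg_distrib]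
      apply Finset.sum_congr rfl
      intro j _
      cases hσ : σ j <;> simp [sign, hσ]
    have h1 : ((∑ j ∈ Finset.univ.filter (fun j : Fin n => (j : ℕ) < i),
        sign (σ j)).toNat) ≤ drift σ := by
      unfold drift
      exact Finset.le_sup (f := fun i =>
        (∑ j ∈ Finset.univ.filter (fun j : Fin n => (j : ℕ) < i), sign (σ j)).toNat) hmem
    have h2 : ((∑ j ∈ Finset.univ.filter (fun j : Fin n => (j : ℕ) < i),
        sign (!σ j)).toNat) ≤ drift (fun j => !σ j) := by
      unfold drift
      exact Finset.le_sup (f := fun i =>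
        (∑ j ∈ Finset.univ.filter (fun j : Fin n => (j : ℕ) < i),
          sign ((fun j => !σ j) j)).toNat) hmem
    have hub : (∑ j ∈ Finset.univ.filter (fun j : Fin n => (j : ℕ) < i), sign (σ j)) ≤ h := by
      refine le_trans (Int.self_le_toNat _) ?_
      exact_mod_cast le_trans h1 (hmax ▸ le_max_left _ _)
    have hlb : (∑ j ∈ Finset.univ.filter (fun j : Fin n => (j : ℕ) < i), sign (!σ j)) ≤ h := by
      refine le_trans (Int.self_le_toNat _) ?_
      exact_mod_cast le_trans h2 (hmax ▸ le_max_right _ _)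
    rw [hsum2] at hlb
    rw [Set.mem_Icc, ← hsum1]
    constructor <;> linarith
  obtain ⟨A, B, C, hσA, hσB, hAC, hBC, hAinj, hBinj, hCinj, hdist⟩ :=
    exists_triples σ h K hdrift hk3 hk2
  have hACv : ∀ p, (A p : ℕ) < (C p : ℕ) := fun p => hAC p
  have hBCv : ∀ p, (B p : ℕ) < (C p : ℕ) := fun p => hBC p
  by_cases hA0 : ∃ p0, (A p0 : ℕ) = 0
  · obtain ⟨p0, hp00⟩ := hA0
    set z : Fin K := ⟨0, hKpos⟩ with hz
    have hzv : ((z : Fin K) : ℕ) = 0 := rfl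
    refine build_perm σ K (A ∘ Equiv.swap z p0) (B ∘ Equiv.swap z p0) (C ∘ Equiv.swap z p0)
      (fun p => 3 * (p : ℕ)) hn0 (fun p => hσA _) (fun p => hσB _) (fun p => hAC _)
      (fun p => hBC _) (hAinj.comp (Equiv.swap z p0).injective)
      (hBinj.comp (Equiv.swap z p0).injective) (hCinj.comp (Equiv.swap z p0).injective)
      (fun p p' => hdist _ _) ?_ ?_ ?_
    · intro p p' r r' hr hr' heq
      have heq' : (3 * (p : ℕ) + r) % n = (3 * (p' : ℕ) + r') % n := heq
      have hb1 : 3 * (p : ℕ) + r < n := by have := p.isLt; omega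
      have hb2 : 3 * (p' : ℕ) + r' < n := by have := p'.isLt; omega
      rw [Nat.mod_eq_of_lt hb1, Nat.mod_eq_of_lt hb2] at heq'
      exact ⟨Fin.ext (by omega), by omega⟩
    · intro p r hr h0
      have h0' : (3 * (p : ℕ) + r) % n = 0 := h0
      have hb1 : 3 * (p : ℕ) + r < n := by have := p.isLt; omega
      rw [Nat.mod_eq_of_lt hb1] at h0'
      have hp : p = z := Fin.ext (by omega)
      have hr0 : r = 0 := by omega
      subst hp; subst hr0
      rw [if_pos rfl]
      show ((A (Equiv.swap z p0 z)) : ℕ) = 0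
      rw [Equiv.swap_apply_left]
      exact hp00
    · intro p _
      refine ⟨z, 0, by omega, ?_⟩
      show (3 * ((z : Fin K) : ℕ) + 0) % n = 0
      rw [hzv]
      simp
  · by_cases hB0 : ∃ p0, (B p0 : ℕ) = 0
    · obtain ⟨p0, hp00⟩ := hB0
      set z : Fin K := ⟨0, hKpos⟩ with hz
      have hzv : ((z : Fin K) : ℕ) = 0 := rfl
      have hval0 : ∀ r, r < 3 → (n - 2 + r) % n = if r = 2 then 0 else n - 2 + r := by
        intro r hr
        interval_cases r
        · rw [if_neg (by omega), Nat.mod_eq_of_lt (by omega)]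
        · rw [if_neg (by omega), Nat.mod_eq_of_lt (by omega)]
        · rw [if_pos rfl, show n - 2 + 2 = n by omega, Nat.mod_self]
      refine build_perm σ K (A ∘ Equiv.swap z p0) (B ∘ Equiv.swap z p0) (C ∘ Equiv.swap z p0)
        (fun p => if (p : ℕ) = 0 then n - 2 else 3 * (p : ℕ) - 2) hn0
        (fun p => hσA _) (fun p => hσB _) (fun p => hAC _)
        (fun p => hBC _) (hAinj.comp (Equiv.swap z p0).injective)
        (hBinj.comp (Equiv.swap z p0).injective) (hCinj.comp (Equiv.swap z p0).injective)
        (fun p p' => hdist _ _) ?_ ?_ ?_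
      · intro p p' r r' hr hr' heq
        have heq' : ((if (p : ℕ) = 0 then n - 2 else 3 * (p : ℕ) - 2) + r) % n =
            ((if (p' : ℕ) = 0 then n - 2 else 3 * (p' : ℕ) - 2) + r') % n := heq
        by_cases hp : (p : ℕ) = 0 <;> by_cases hp' : (p' : ℕ) = 0
        · rw [if_pos hp, if_pos hp', hval0 r hr, hval0 r' hr'] at heq'
          refine ⟨Fin.ext (by omega), ?_⟩
          split_ifs at heq' <;> omega
        · rw [if_pos hp, if_neg hp', hval0 r hr,
            Nat.mod_eq_of_lt (by have := p'.isLt; omega)] at heq'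
          exfalso
          have hub : 3 * (p' : ℕ) - 2 + r' ≤ n - 3 := by have := p'.isLt; omega
          split_ifs at heq' <;> omega
        · rw [if_neg hp, if_pos hp', hval0 r' hr',
            Nat.mod_eq_of_lt (by have := p.isLt; omega)] at heq'
          exfalso
          have hub : 3 * (p : ℕ) - 2 + r ≤ n - 3 := by have := p.isLt; omega
          split_ifs at heq' <;> omega
        · rw [if_neg hp, if_neg hp', Nat.mod_eq_of_lt (by have := p.isLt; omega),
            Nat.mod_eq_of_lt (by have := p'.isLt; omega)] at heq'
          exact ⟨Fin.ext (by omega), by omega⟩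
      · intro p r hr h0
        have h0' : ((if (p : ℕ) = 0 then n - 2 else 3 * (p : ℕ) - 2) + r) % n = 0 := h0
        by_cases hp : (p : ℕ) = 0
        · rw [if_pos hp, hval0 r hr] at h0'
          split_ifs at h0' with hr2
          · subst hr2
            rw [if_neg (by omega), if_neg (by omega)]
            have hpz : p = z := Fin.ext (by omega)
            subst hpz
            show ((B (Equiv.swap z p0 z)) : ℕ) = 0
            rw [Equiv.swap_apply_left]
            exact hp00
          · omega
        · rw [if_neg hp, Nat.mod_eq_of_lt (by have := p.isLt; omega)] at h0'
          exfalso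
          omega
      · intro p _
        refine ⟨z, 2, by omega, ?_⟩
        show ((if ((z : Fin K) : ℕ) = 0 then n - 2 else 3 * ((z : Fin K) : ℕ) - 2) + 2) % n = 0
        rw [if_pos rfl, show n - 2 + 2 = n by omega, Nat.mod_self]
    · -- diner 0 is unused
      push_neg at hA0 hB0
      have hC0 : ∀ p, (C p : ℕ) ≠ 0 := by
        intro p hc
        have := hACv p
        omega
      -- the 3K bench diners avoid diner 0, so 3K ≤ n - 1
      have hSdisjAB : Disjoint (Finset.univ.image A) (Finset.univ.image B) := by
        rw [Finset.disjoint_left]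
        rintro x hxa hxb
        obtain ⟨p, _, rfl⟩ := Finset.mem_image.mp hxa
        obtain ⟨p', _, hba⟩ := Finset.mem_image.mp hxb
        exact (hdist p p').1 hba.symm
      have hSdisjC : Disjoint (Finset.univ.image A ∪ Finset.univ.image B)
          (Finset.univ.image C) := by
        rw [Finset.disjoint_left]
        rintro x hxab hxc
        obtain ⟨p, _, rfl⟩ := Finset.mem_image.mp hxc
        rcases Finset.mem_union.mp hxab with hxa | hxb
        · obtain ⟨p', _, hba⟩ := Finset.mem_image.mp hxa
          exact (hdist p' p).2.1 hba
        · obtain ⟨p', _, hba⟩ := Finset.mem_image.mp hxb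
          exact (hdist p' p).2.2 hba
      have hScard : (Finset.univ.image A ∪ Finset.univ.image B ∪ Finset.univ.image C).card
          = 3 * K := by
        rw [Finset.card_union_of_disjoint hSdisjC, Finset.card_union_of_disjoint hSdisjAB,
          Finset.card_image_of_injective _ hAinj, Finset.card_image_of_injective _ hBinj,
          Finset.card_image_of_injective _ hCinj, Finset.card_univ, Fintype.card_fin]
        ring
      have hSsub : (Finset.univ.image A ∪ Finset.univ.image B ∪ Finset.univ.image C) ⊆
          Finset.univ.erase (⟨0, hn0⟩ : Fin n) := by
        intro x hx
        rw [Finset.mem_erase]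
        refine ⟨?_, Finset.mem_univ _⟩
        rcases Finset.mem_union.mp hx with hx' | hxc
        · rcases Finset.mem_union.mp hx' with hxa | hxb
          · obtain ⟨p, _, rfl⟩ := Finset.mem_image.mp hxa
            intro hcon
            exact hA0 p (congrArg Fin.val hcon)
          · obtain ⟨p, _, rfl⟩ := Finset.mem_image.mp hxb
            intro hcon
            exact hB0 p (congrArg Fin.val hcon)
        · obtain ⟨p, _, rfl⟩ := Finset.mem_image.mp hxc
          intro hcon
          exact hC0 p (congrArg Fin.val hcon)
      have h3K1 : 3 * K ≤ n - 1 := by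
        have := Finset.card_le_card hSsub
        rw [hScard, Finset.card_erase_of_mem (Finset.mem_univ _), Finset.card_univ,
          Fintype.card_fin] at this
        exact this
      refine build_perm σ K A B C (fun p => 3 * (p : ℕ) + 1) hn0 hσA hσB hAC hBC
        hAinj hBinj hCinj hdist ?_ ?_ ?_
      · intro p p' r r' hr hr' heq
        have heq' : (3 * (p : ℕ) + 1 + r) % n = (3 * (p' : ℕ) + 1 + r') % n := heq
        have hb1 : 3 * (p : ℕ) + 1 + r < n := by have := p.isLt; omega
        have hb2 : 3 * (p' : ℕ) + 1 + r' < n := by have := p'.isLt; omega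
        rw [Nat.mod_eq_of_lt hb1, Nat.mod_eq_of_lt hb2] at heq'
        exact ⟨Fin.ext (by omega), by omega⟩
      · intro p r hr h0
        have h0' : (3 * (p : ℕ) + 1 + r) % n = 0 := h0
        have hb1 : 3 * (p : ℕ) + 1 + r < n := by have := p.isLt; omega
        rw [Nat.mod_eq_of_lt hb1] at h0'
        exfalso
        omega
      · intro p hor
        exfalso
        rcases hor with h' | h' | h'
        · exact hA0 p h'
        · exact hB0 p h'
        · exact hC0 p h'

end Napkin
end

section
/- Fix a positive integer n with q = ⌊n/3⌋. For any preference order σ ∈ {±1}^n, setting h = max(h(σ), h(−σ)), the maximal number of napkinless diners is exactly ν_max(σ) = min{q, ⌊(n−h)/2⌋}. -/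
namespace Napkin

variable {n q : ℕ}

open Fin.CommRing Fin.NatCast

section Machinery

variable (σ : Fin n → Bool) (w : Equiv.Perm (Fin n))

/-- the seat of diner d -/
def seat (d : Fin n) : Fin n := w.symm d

def pref (d : Fin n) : Fin n := if σ d then seat w d else leftNapkin (seat w d)
def other (d : Fin n) : Fin n := if σ d then leftNapkin (seat w d) else seat w d

def step (st : Finset (Fin n) × Finset (Fin n)) (j : Fin n) :
    Finset (Fin n) × Finset (Fin n) :=
  if pref σ w j ∉ st.1 then (insert (pref σ w j) st.1, st.2)
  else if other σ w j ∉ st.1 then (insert (other σ w j) st.1, st.2)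
  else (st.1, insert j st.2)

def stateAt (j : ℕ) : Finset (Fin n) × Finset (Fin n) :=
  ((List.finRange n).take j).foldl (step σ w) (∅, ∅)

lemma dine_eq : dine σ w = stateAt σ w n := by
  unfold dine stateAt step pref other seat
  rw [List.take_of_length_le (by simp)]

lemma stateAt_succ (j : ℕ) (hj : j < n) :
    stateAt σ w (j + 1) = step σ w (stateAt σ w j) ⟨j, hj⟩ := by
  unfold stateAt
  have hg : (List.finRange n)[j]? = some ⟨j, hj⟩ := by
    rw [List.getElem?_eq_getElem (by simpa using hj)]
    simp
  rw [List.take_succ, hg, List.foldl_append]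
  rfl

lemma stateAt_succ_ge (j : ℕ) (hj : n ≤ j) :
    stateAt σ w (j + 1) = stateAt σ w j := by
  unfold stateAt
  rw [List.take_of_length_le (by simp only [List.length_finRange]; omega),
    List.take_of_length_le (by simp only [List.length_finRange]; omega)]

lemma mono1 {i j : ℕ} (hij : i ≤ j) : (stateAt σ w i).1 ⊆ (stateAt σ w j).1 := by
  induction j with
  | zero => simpa using (Nat.le_zero.mp hij) ▸ Finset.Subset.refl _
  | succ j ih =>
    rcases Nat.lt_or_ge i (j+1) with h | h
    · refine subset_trans (ih (by omega)) ?_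
      rcases Nat.lt_or_ge j n with hn | hn
      · rw [stateAt_succ σ w j hn]
        unfold step
        split
        · exact Finset.subset_insert _ _
        · split
          · exact Finset.subset_insert _ _
          · exact Finset.Subset.refl _
      · rw [stateAt_succ_ge σ w j hn]
    · have : i = j + 1 := le_antisymm hij h
      exact this ▸ Finset.Subset.refl _

lemma mono2 {i j : ℕ} (hij : i ≤ j) : (stateAt σ w i).2 ⊆ (stateAt σ w j).2 := by
  induction j with
  | zero => simpa using (Nat.le_zero.mp hij) ▸ Finset.Subset.refl _
  | succ j ih =>
    rcases Nat.lt_or_ge i (j+1) with h | h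
    · refine subset_trans (ih (by omega)) ?_
      rcases Nat.lt_or_ge j n with hn | hn
      · rw [stateAt_succ σ w j hn]
        unfold step
        split
        · exact Finset.Subset.refl _
        · split
          · exact Finset.Subset.refl _
          · exact Finset.subset_insert _ _
      · rw [stateAt_succ_ge σ w j hn]
    · have : i = j + 1 := le_antisymm hij h
      exact this ▸ Finset.Subset.refl _

/-- diner d claims napkin p -/
def claims_s9 (d p : Fin n) : Prop :=
  p ∉ (stateAt σ w d).1 ∧ p ∈ (stateAt σ w ((d : ℕ) + 1)).1

lemma claims_eq {d p : Fin n} (h : claims_s9 σ w d p) :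
    p = pref σ w d ∨ p = other σ w d := by
  obtain ⟨h1, h2⟩ := h
  rw [show ((d:ℕ)+1) = ((d:ℕ)+1) from rfl, stateAt_succ σ w d d.isLt, Fin.eta] at h2
  unfold step at h2
  split at h2
  · left
    rcases Finset.mem_insert.mp h2 with h | h
    · exact h
    · exact absurd h h1
  · split at h2
    · right
      rcases Finset.mem_insert.mp h2 with h | h
      · exact h
      · exact absurd h h1
    · exact absurd h2 h1

lemma claims_unique {d p p' : Fin n} (h : claims_s9 σ w d p) (h' : claims_s9 σ w d p') :
    p = p' := by
  obtain ⟨h1, h2⟩ := h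
  obtain ⟨h1', h2'⟩ := h'
  rw [stateAt_succ σ w d d.isLt, Fin.eta] at h2 h2'
  unfold step at h2 h2'
  by_cases hp : pref σ w d ∉ (stateAt σ w (d : ℕ)).1
  · rw [if_pos hp] at h2 h2'
    rw [show (insert (pref σ w d) (stateAt σ w (d:ℕ)).1, (stateAt σ w (d:ℕ)).2).1
      = insert (pref σ w d) (stateAt σ w (d:ℕ)).1 from rfl, Finset.mem_insert] at h2 h2'
    rcases h2 with h | h
    · rcases h2' with h' | h'
      · rw [h, h']
      · exact absurd h' h1'
    · exact absurd h h1
  · rw [if_neg hp] at h2 h2'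
    by_cases ho : other σ w d ∉ (stateAt σ w (d : ℕ)).1
    · rw [if_pos ho] at h2 h2'
      rw [show (insert (other σ w d) (stateAt σ w (d:ℕ)).1, (stateAt σ w (d:ℕ)).2).1
        = insert (other σ w d) (stateAt σ w (d:ℕ)).1 from rfl, Finset.mem_insert] at h2 h2'
      rcases h2 with h | h
      · rcases h2' with h' | h'
        · rw [h, h']
        · exact absurd h' h1'
      · exact absurd h h1
    · rw [if_neg ho] at h2
      exact absurd h2 h1

lemma exists_claimant {p : Fin n} {j : ℕ} (h : p ∈ (stateAt σ w j).1) :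
    ∃ d : Fin n, (d : ℕ) < j ∧ claims_s9 σ w d p := by
  induction j with
  | zero => simp [stateAt] at h
  | succ j ih =>
    rcases Nat.lt_or_ge j n with hn | hn
    · by_cases hp : p ∈ (stateAt σ w j).1
      · obtain ⟨d, hd, hc⟩ := ih hp
        exact ⟨d, by omega, hc⟩
      · refine ⟨⟨j, hn⟩, by simp, hp, ?_⟩
        simpa using h
    · rw [stateAt_succ_ge σ w j hn] at h
      obtain ⟨d, hd, hc⟩ := ih h
      exact ⟨d, by omega, hc⟩

lemma mem2_iff {d : Fin n} {j : ℕ} :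
    d ∈ (stateAt σ w j).2 ↔ (d : ℕ) < j ∧ pref σ w d ∈ (stateAt σ w d).1 ∧
      other σ w d ∈ (stateAt σ w d).1 := by
  induction j with
  | zero => simp [stateAt]
  | succ j ih =>
    rcases Nat.lt_or_ge j n with hn | hn
    · rw [stateAt_succ σ w j hn]
      unfold step
      split
      · rename_i hpref
        rw [ih]
        constructor
        · rintro ⟨h1, h2, h3⟩; exact ⟨by omega, h2, h3⟩
        · rintro ⟨h1, h2, h3⟩
          refine ⟨?_, h2, h3⟩
          rcases Nat.lt_or_ge (d : ℕ) j with h | h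
          · exact h
          · exfalso
            have : d = ⟨j, hn⟩ := Fin.ext (by simp only [Fin.val_mk]; omega)
            rw [this] at h2
            exact hpref h2
      · split
        · rename_i hother
          rw [ih]
          constructor
          · rintro ⟨h1, h2, h3⟩; exact ⟨by omega, h2, h3⟩
          · rintro ⟨h1, h2, h3⟩
            refine ⟨?_, h2, h3⟩
            rcases Nat.lt_or_ge (d : ℕ) j with h | h
            · exact h
            · exfalso
              have : d = ⟨j, hn⟩ := Fin.ext (by simp only [Fin.val_mk]; omega)
              rw [this] at h3
              exact hother h3
        · rename_i hpref hother
          rw [not_not] at hpref hother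
          simp only [Finset.mem_insert]
          rw [ih]
          constructor
          · rintro (rfl | ⟨h1, h2, h3⟩)
            · exact ⟨by simp, hpref, hother⟩
            · exact ⟨by omega, h2, h3⟩
          · rintro ⟨h1, h2, h3⟩
            rcases Nat.lt_or_ge (d : ℕ) j with h | h
            · exact Or.inr ⟨h, h2, h3⟩
            · exact Or.inl (Fin.ext (by simp only [Fin.val_mk]; omega))
    · rw [stateAt_succ_ge σ w j hn, ih]
      have := d.isLt
      constructor
      · rintro ⟨h1, h2, h3⟩; exact ⟨by omega, h2, h3⟩
      · rintro ⟨h1, h2, h3⟩; exact ⟨by omega, h2, h3⟩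

lemma napkinless_not_claims {d p : Fin n} (h : d ∈ (dine σ w).2) :
    ¬ claims_s9 σ w d p := by
  rw [dine_eq, mem2_iff] at h
  obtain ⟨-, h2, h3⟩ := h
  rintro ⟨hc1, hc2⟩
  rw [stateAt_succ σ w d d.isLt, Fin.eta] at hc2
  unfold step at hc2
  rw [if_neg (by simpa using h2), if_neg (by simpa using h3)] at hc2
  exact hc1 hc2

lemma claims_other_pref {d p : Fin n} (h : claims_s9 σ w d p) (hne : p ≠ pref σ w d) :
    pref σ w d ∈ (stateAt σ w d).1 := by
  obtain ⟨h1, h2⟩ := h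
  rw [stateAt_succ σ w d d.isLt, Fin.eta] at h2
  unfold step at h2
  split at h2
  · exfalso
    rcases Finset.mem_insert.mp h2 with h | h
    · exact hne h
    · exact h1 h
  · rename_i hp
    exact not_not.mp hp

lemma card1_le (j : ℕ) : (stateAt σ w j).1.card ≤ j := by
  induction j with
  | zero => simp [stateAt]
  | succ j ih =>
    rcases Nat.lt_or_ge j n with hn | hn
    · rw [stateAt_succ σ w j hn]
      unfold step
      split
      · calc _ ≤ (stateAt σ w j).1.card + 1 := Finset.card_insert_le _ _
          _ ≤ j + 1 := by omega
      · split
        · calc _ ≤ (stateAt σ w j).1.card + 1 := Finset.card_insert_le _ _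
            _ ≤ j + 1 := by omega
        · exact ih.trans (by omega)
    · rw [stateAt_succ_ge σ w j hn]
      exact ih.trans (by omega)

lemma napkinless_mem1 {d : Fin n} (h : d ∈ (dine σ w).2) :
    pref σ w d ∈ (stateAt σ w d).1 ∧ other σ w d ∈ (stateAt σ w d).1 :=
  ((mem2_iff σ w).mp ((dine_eq σ w) ▸ h)).2

section Group

variable [NeZero n]

lemma leftNapkin_eq (s : Fin n) : leftNapkin s = s - 1 := by
  ext
  rw [Fin.sub_def]
  rcases Nat.lt_or_ge 1 n with h | h
  · simp [leftNapkin, Nat.mod_eq_of_lt h, Nat.add_comm]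
  · interval_cases n
    · exact absurd (NeZero.ne 0) (by simp)
    · simp [leftNapkin, Fin.ext_iff]

lemma pair_eq (d : Fin n) :
    ({pref σ w d, other σ w d} : Finset (Fin n)) = {seat w d, seat w d - 1} := by
  unfold pref other
  cases hσ : σ d <;> simp [leftNapkin_eq, seat, Finset.pair_comm]

lemma claims_seat {d p : Fin n} (h : claims_s9 σ w d p) :
    seat w d = p ∨ seat w d = p + 1 := by
  have := claims_eq σ w h
  have hmem : p ∈ ({pref σ w d, other σ w d} : Finset (Fin n)) := by
    rcases this with h | h <;> simp [h]
  rw [pair_eq] at hmem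
  rcases Finset.mem_insert.mp hmem with h | h
  · exact Or.inl h.symm
  · right
    have := Finset.mem_singleton.mp h
    rw [this]
    ring

lemma seat_pref_mem {d : Fin n} (h : d ∈ (dine σ w).2) :
    seat w d ∈ (stateAt σ w d).1 ∧ seat w d - 1 ∈ (stateAt σ w d).1 := by
  obtain ⟨h1, h2⟩ := napkinless_mem1 σ w h
  simp only [pref, other] at h1 h2
  cases hσ : σ d <;> rw [hσ] at h1 h2 <;>
    simp only [if_true, if_false, Bool.false_eq_true, leftNapkin_eq] at h1 h2 <;>
    exact ⟨by assumption, by assumption⟩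

end Group

lemma napkinless_big {c : Fin n} (h : c ∈ (dine σ w).2) : 3 ≤ n ∧ 2 ≤ (c : ℕ) := by
  have h1 : 1 ≤ n := c.pos
  have : NeZero n := ⟨by omega⟩
  rcases Nat.lt_or_ge n 2 with h2 | h2
  · interval_cases n
    exfalso
    have := (napkinless_mem1 σ w h).1
    have hc0 : (c : ℕ) = 0 := by omega
    have : pref σ w c ∈ (stateAt σ w 0).1 := by rwa [hc0] at this
    simpa [stateAt] using this
  · -- n ≥ 2 : the two napkins of c's seat are distinct and claimed before c
    have hone : (1 : Fin n) ≠ 0 := by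
      have : ((1 : Fin n) : ℕ) = 1 := by
        rw [Fin.val_one', Nat.mod_eq_of_lt h2]
      intro hh
      rw [hh] at this
      simp at this
    obtain ⟨hs1, hs2⟩ := seat_pref_mem σ w h
    have hne : seat w c ≠ seat w c - 1 := by
      intro hh
      exact hone (by linear_combination hh)
    have hsub : ({seat w c, seat w c - 1} : Finset (Fin n)) ⊆ (stateAt σ w c).1 := by
      intro x hx
      rcases Finset.mem_insert.mp hx with rfl | hx
      · exact hs1
      · rw [Finset.mem_singleton.mp hx]
        exact hs2
    have hcard : 2 ≤ (stateAt σ w (c : ℕ)).1.card := by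
      have := Finset.card_le_card hsub
      rwa [Finset.card_insert_of_notMem (by simpa using hne), Finset.card_singleton] at this
    have := card1_le σ w (c : ℕ)
    exact ⟨by omega, by omega⟩

section Chains

variable [NeZero n]

lemma fin_one_ne_zero (h2 : 2 ≤ n) : (1 : Fin n) ≠ 0 := by
  have hv : ((1 : Fin n) : ℕ) = 1 := by
    rw [Fin.val_one', Nat.mod_eq_of_lt h2]
  intro hh
  rw [hh] at hv
  simp at hv

/-- diner at seat t claimed the napkin to its right -/
def RR (t : Fin n) : Prop := claims_s9 σ w (w t) t

/-- diner at seat t claimed the napkin to its left -/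
def LL (t : Fin n) : Prop := claims_s9 σ w (w t) (t - 1)

lemma hR1 {c : Fin n} (hc : c ∈ (dine σ w).2) :
    RR σ w (w.symm c - 1) ∧ w (w.symm c - 1) < c := by
  show RR σ w (seat w c - 1) ∧ w (seat w c - 1) < c
  have hmem := (seat_pref_mem σ w hc).2
  obtain ⟨d, hd, hcl⟩ := exists_claimant σ w hmem
  rcases claims_seat σ w hcl with h | h
  · have hdw : d = w (seat w c - 1) := (Equiv.symm_apply_eq w).mp h
    constructor
    · rw [RR, ← hdw]
      exact hcl
    · rw [← hdw]
      exact hd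
  · exfalso
    have h2 : seat w d = seat w c := by rw [h]; ring
    have : d = c := w.symm.injective h2
    rw [this] at hd
    exact lt_irrefl _ hd

lemma R_step {t : Fin n} (hR : RR σ w t) (hσ : σ (w t) = false) (h2 : 2 ≤ n) :
    RR σ w (t - 1) ∧ w (t - 1) < w t := by
  have hpref : pref σ w (w t) = t - 1 := by
    rw [pref, hσ]
    simp [seat, leftNapkin_eq]
  have hne : (t : Fin n) ≠ pref σ w (w t) := by
    rw [hpref]
    intro hh
    exact fin_one_ne_zero h2 (by linear_combination hh)
  have hmem : pref σ w (w t) ∈ (stateAt σ w (w t : ℕ)).1 := claims_other_pref σ w hR hne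
  rw [hpref] at hmem
  obtain ⟨d, hd, hcl⟩ := exists_claimant σ w hmem
  rcases claims_seat σ w hcl with h | h
  · have hdw : d = w (t - 1) := (Equiv.symm_apply_eq w).mp h
    constructor
    · rw [RR, ← hdw]; exact hcl
    · rw [← hdw]; exact hd
  · exfalso
    have h' : seat w d = t := by rw [h]; ring
    have : d = w t := by
      have := (Equiv.symm_apply_eq w).mp h'
      rw [this]
    rw [this] at hd
    exact lt_irrefl _ hd

lemma chainR {c : Fin n} (hc : c ∈ (dine σ w).2) :
    ∀ i : ℕ, (∀ j : ℕ, j < i → σ (w (w.symm c - 1 - (j : Fin n))) = false) →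
    RR σ w (w.symm c - 1 - (i : Fin n)) ∧ w (w.symm c - 1 - (i : Fin n)) < c := by
  have h3 := (napkinless_big σ w hc).1
  intro i
  induction i with
  | zero => intro _; simpa using hR1 σ w hc
  | succ i ih =>
    intro hcond
    obtain ⟨hRi, hlt⟩ := ih (fun j hj => hcond j (by omega))
    have hstep := R_step σ w hRi (hcond i (by omega)) (by omega)
    have harith : w.symm c - 1 - (i : Fin n) - 1 = w.symm c - 1 - ((i+1 : ℕ) : Fin n) := by
      push_cast
      ring
    rw [harith] at hstep
    exact ⟨hstep.1, hstep.2.trans hlt⟩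

lemma exists_plusR {c : Fin n} (hc : c ∈ (dine σ w).2) :
    ∃ i : ℕ, σ (w (w.symm c - 1 - (i : Fin n))) = true := by
  by_contra hcon
  push_neg at hcon
  have hall : ∀ j : ℕ, σ (w (w.symm c - 1 - (j : Fin n))) = false := by
    intro j
    simpa using hcon j
  have h1 : 1 ≤ n := c.pos
  have := (chainR σ w hc (n - 1) (fun j _ => hall j)).1
  have hcast : ((n - 1 : ℕ) : Fin n) = -1 := by
    rw [Nat.cast_sub h1]
    simp
  rw [hcast, show w.symm c - 1 - (-1 : Fin n) = w.symm c by ring] at this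
  rw [RR, Equiv.apply_symm_apply] at this
  exact napkinless_not_claims σ w hc this

noncomputable def AA (c : Fin n) : Fin n :=
  if hc : c ∈ (dine σ w).2 then
    w (w.symm c - 1 - ((Nat.find (exists_plusR σ w hc) : ℕ) : Fin n))
  else c

lemma AA_spec {c : Fin n} (hc : c ∈ (dine σ w).2) :
    σ (AA σ w c) = true ∧ AA σ w c < c ∧ claims_s9 σ w (AA σ w c) (w.symm (AA σ w c)) := by
  rw [AA, dif_pos hc]
  have hfind := Nat.find_spec (exists_plusR σ w hc)
  have hmin : ∀ j : ℕ, j < Nat.find (exists_plusR σ w hc) →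
      σ (w (w.symm c - 1 - (j : Fin n))) = false := by
    intro j hj
    simpa using Nat.find_min (exists_plusR σ w hc) hj
  obtain ⟨hRi, hlt⟩ := chainR σ w hc _ hmin
  refine ⟨hfind, hlt, ?_⟩
  rw [Equiv.symm_apply_apply]
  exact hRi

lemma AA_aux {c c' : Fin n} (hc : c ∈ (dine σ w).2) (hc' : c' ∈ (dine σ w).2)
    (hle : Nat.find (exists_plusR σ w hc) ≤ Nat.find (exists_plusR σ w hc'))
    (heq : w.symm c - 1 - ((Nat.find (exists_plusR σ w hc) : ℕ) : Fin n)
      = w.symm c' - 1 - ((Nat.find (exists_plusR σ w hc') : ℕ) : Fin n)) : c = c' := by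
  set i := Nat.find (exists_plusR σ w hc) with hi
  set i' := Nat.find (exists_plusR σ w hc') with hi'
  rcases eq_or_lt_of_le hle with h | h
  · rw [← h] at heq
    have : w.symm c = w.symm c' := by linear_combination heq
    exact w.symm.injective this
  · exfalso
    set j := i' - i - 1 with hj
    have hjlt : j < i' := by omega
    have hcast : ((j : ℕ) : Fin n) = ((i' : ℕ) : Fin n) - (i : Fin n) - 1 := by
      rw [hj, Nat.cast_sub (by omega), Nat.cast_sub (by omega)]
      push_cast
      ring
    have hs : w.symm c' - 1 - (j : Fin n) = w.symm c := by
      rw [hcast]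
      linear_combination -heq
    have hmin : ∀ k : ℕ, k < j → σ (w (w.symm c' - 1 - (k : Fin n))) = false := by
      intro k hk
      simpa using Nat.find_min (exists_plusR σ w hc') (by omega : k < i')
    have := (chainR σ w hc' j hmin).1
    rw [hs, RR, Equiv.apply_symm_apply] at this
    exact napkinless_not_claims σ w hc this

lemma AA_inj {c c' : Fin n} (hc : c ∈ (dine σ w).2) (hc' : c' ∈ (dine σ w).2)
    (h : AA σ w c = AA σ w c') : c = c' := by
  simp only [AA] at h
  rw [dif_pos hc, dif_pos hc'] at h
  have heq := w.injective h
  rcases le_total (Nat.find (exists_plusR σ w hc)) (Nat.find (exists_plusR σ w hc')) with hle | hle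
  · exact AA_aux σ w hc hc' hle heq
  · exact (AA_aux σ w hc' hc hle heq.symm).symm

lemma hL1 {c : Fin n} (hc : c ∈ (dine σ w).2) :
    LL σ w (w.symm c + 1) ∧ w (w.symm c + 1) < c := by
  show LL σ w (seat w c + 1) ∧ w (seat w c + 1) < c
  have hmem := (seat_pref_mem σ w hc).1
  obtain ⟨d, hd, hcl⟩ := exists_claimant σ w hmem
  rcases claims_seat σ w hcl with h | h
  · exfalso
    have : d = c := w.symm.injective h
    rw [this] at hd
    exact lt_irrefl _ hd
  · have hdw : d = w (seat w c + 1) := (Equiv.symm_apply_eq w).mp h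
    constructor
    · rw [LL, ← hdw, show seat w c + 1 - 1 = seat w c by ring]
      exact hcl
    · rw [← hdw]
      exact hd

lemma L_step {t : Fin n} (hL : LL σ w t) (hσ : σ (w t) = true) (h2 : 2 ≤ n) :
    LL σ w (t + 1) ∧ w (t + 1) < w t := by
  have hpref : pref σ w (w t) = t := by
    rw [pref, hσ]
    simp [seat]
  have hne : (t - 1 : Fin n) ≠ pref σ w (w t) := by
    rw [hpref]
    intro hh
    exact fin_one_ne_zero h2 (by linear_combination -hh)
  have hmem : pref σ w (w t) ∈ (stateAt σ w (w t : ℕ)).1 := claims_other_pref σ w hL hne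
  rw [hpref] at hmem
  obtain ⟨d, hd, hcl⟩ := exists_claimant σ w hmem
  rcases claims_seat σ w hcl with h | h
  · exfalso
    have : d = w t := (Equiv.symm_apply_eq w).mp h
    rw [this] at hd
    exact lt_irrefl _ hd
  · have hdw : d = w (t + 1) := (Equiv.symm_apply_eq w).mp h
    constructor
    · rw [LL, ← hdw, show t + 1 - 1 = t by ring]
      exact hcl
    · rw [← hdw]
      exact hd

lemma chainL {c : Fin n} (hc : c ∈ (dine σ w).2) :
    ∀ i : ℕ, (∀ j : ℕ, j < i → σ (w (w.symm c + 1 + (j : Fin n))) = true) →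
    LL σ w (w.symm c + 1 + (i : Fin n)) ∧ w (w.symm c + 1 + (i : Fin n)) < c := by
  have h3 := (napkinless_big σ w hc).1
  intro i
  induction i with
  | zero => intro _; simpa using hL1 σ w hc
  | succ i ih =>
    intro hcond
    obtain ⟨hLi, hlt⟩ := ih (fun j hj => hcond j (by omega))
    have hstep := L_step σ w hLi (hcond i (by omega)) (by omega)
    have harith : w.symm c + 1 + (i : Fin n) + 1 = w.symm c + 1 + ((i+1 : ℕ) : Fin n) := by
      push_cast
      ring
    rw [harith] at hstep
    exact ⟨hstep.1, hstep.2.trans hlt⟩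

lemma exists_minusL {c : Fin n} (hc : c ∈ (dine σ w).2) :
    ∃ i : ℕ, σ (w (w.symm c + 1 + (i : Fin n))) = false := by
  by_contra hcon
  push_neg at hcon
  have hall : ∀ j : ℕ, σ (w (w.symm c + 1 + (j : Fin n))) = true := by
    intro j
    simpa using hcon j
  have h1 : 1 ≤ n := c.pos
  have := (chainL σ w hc (n - 1) (fun j _ => hall j)).1
  have hcast : ((n - 1 : ℕ) : Fin n) = -1 := by
    rw [Nat.cast_sub h1]
    simp
  rw [hcast, show w.symm c + 1 + (-1 : Fin n) = w.symm c by ring] at this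
  rw [LL, Equiv.apply_symm_apply] at this
  exact napkinless_not_claims σ w hc this

noncomputable def BB (c : Fin n) : Fin n :=
  if hc : c ∈ (dine σ w).2 then
    w (w.symm c + 1 + ((Nat.find (exists_minusL σ w hc) : ℕ) : Fin n))
  else c

lemma BB_spec {c : Fin n} (hc : c ∈ (dine σ w).2) :
    σ (BB σ w c) = false ∧ BB σ w c < c ∧
      claims_s9 σ w (BB σ w c) (w.symm (BB σ w c) - 1) := by
  rw [BB, dif_pos hc]
  have hfind := Nat.find_spec (exists_minusL σ w hc)
  have hmin : ∀ j : ℕ, j < Nat.find (exists_minusL σ w hc) →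
      σ (w (w.symm c + 1 + (j : Fin n))) = true := by
    intro j hj
    simpa using Nat.find_min (exists_minusL σ w hc) hj
  obtain ⟨hLi, hlt⟩ := chainL σ w hc _ hmin
  refine ⟨hfind, hlt, ?_⟩
  rw [Equiv.symm_apply_apply]
  exact hLi

lemma BB_aux {c c' : Fin n} (hc : c ∈ (dine σ w).2) (hc' : c' ∈ (dine σ w).2)
    (hle : Nat.find (exists_minusL σ w hc) ≤ Nat.find (exists_minusL σ w hc'))
    (heq : w.symm c + 1 + ((Nat.find (exists_minusL σ w hc) : ℕ) : Fin n)
      = w.symm c' + 1 + ((Nat.find (exists_minusL σ w hc') : ℕ) : Fin n)) : c = c' := by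
  set i := Nat.find (exists_minusL σ w hc) with hi
  set i' := Nat.find (exists_minusL σ w hc') with hi'
  rcases eq_or_lt_of_le hle with h | h
  · rw [← h] at heq
    have : w.symm c = w.symm c' := by linear_combination heq
    exact w.symm.injective this
  · exfalso
    set j := i' - i - 1 with hj
    have hjlt : j < i' := by omega
    have hcast : ((j : ℕ) : Fin n) = ((i' : ℕ) : Fin n) - (i : Fin n) - 1 := by
      rw [hj, Nat.cast_sub (by omega), Nat.cast_sub (by omega)]
      push_cast
      ring
    have hs : w.symm c' + 1 + (j : Fin n) = w.symm c := by
      rw [hcast]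
      linear_combination -heq
    have hmin : ∀ k : ℕ, k < j → σ (w (w.symm c' + 1 + (k : Fin n))) = true := by
      intro k hk
      simpa using Nat.find_min (exists_minusL σ w hc') (by omega : k < i')
    have := (chainL σ w hc' j hmin).1
    rw [hs, LL, Equiv.apply_symm_apply] at this
    exact napkinless_not_claims σ w hc this

lemma BB_inj {c c' : Fin n} (hc : c ∈ (dine σ w).2) (hc' : c' ∈ (dine σ w).2)
    (h : BB σ w c = BB σ w c') : c = c' := by
  simp only [BB] at h
  rw [dif_pos hc, dif_pos hc'] at h
  have heq := w.injective h
  rcases le_total (Nat.find (exists_minusL σ w hc)) (Nat.find (exists_minusL σ w hc')) with hle | hle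
  · exact BB_aux σ w hc hc' hle heq
  · exact (BB_aux σ w hc' hc hle heq.symm).symm

lemma AA_ne_BB {c c' : Fin n} (hc : c ∈ (dine σ w).2) (hc' : c' ∈ (dine σ w).2) :
    AA σ w c ≠ BB σ w c' := by
  intro h
  have hA := (AA_spec σ w hc).2.2
  have hB := (BB_spec σ w hc').2.2
  rw [h] at hA
  have heq := claims_unique σ w hA hB
  have h3 := (napkinless_big σ w hc).1
  have h2 : 2 ≤ n := by omega
  exact fin_one_ne_zero h2 (by linear_combination heq)

lemma AA_not_napkinless {c : Fin n} (hc : c ∈ (dine σ w).2) :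
    AA σ w c ∉ (dine σ w).2 := by
  intro h
  exact napkinless_not_claims σ w h (AA_spec σ w hc).2.2

lemma BB_not_napkinless {c : Fin n} (hc : c ∈ (dine σ w).2) :
    BB σ w c ∉ (dine σ w).2 := by
  intro h
  exact napkinless_not_claims σ w h (BB_spec σ w hc).2.2

end Chains

end Machinery

section Psum

def psum (σ : Fin n → Bool) (t : ℕ) : ℤ :=
  ∑ j ∈ Finset.univ.filter (fun j : Fin n => (j : ℕ) < t), sign (σ j)

/-- number of pluses among the first t diners -/
def pc (σ : Fin n → Bool) (t : ℕ) : ℕ :=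
  (Finset.univ.filter (fun j : Fin n => σ j = true ∧ (j : ℕ) < t)).card

def mc (σ : Fin n → Bool) (t : ℕ) : ℕ :=
  (Finset.univ.filter (fun j : Fin n => σ j = false ∧ (j : ℕ) < t)).card

variable (σ : Fin n → Bool)

lemma card_val_lt (t : ℕ) (ht : t ≤ n) :
    (Finset.univ.filter fun j : Fin n => (j : ℕ) < t).card = t := by
  rcases eq_or_lt_of_le ht with heq | h
  · have hall : ∀ j : Fin n, (j : ℕ) < t := fun j => heq ▸ j.isLt
    rw [Finset.filter_true_of_mem (fun j _ => hall j)]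
    simpa using heq.symm
  · rw [show (Finset.univ.filter fun j : Fin n => (j : ℕ) < t) = Finset.Iio ⟨t, h⟩ from by
      ext j; simp [Fin.lt_def]]
    exact Fin.card_Iio _

lemma psum_eq (t : ℕ) : psum σ t = (pc σ t : ℤ) - (mc σ t : ℤ) := by
  rw [psum, ← Finset.sum_filter_add_sum_filter_not _ (fun j => σ j = true)]
  rw [Finset.filter_filter, Finset.filter_filter]
  have h1 : ∀ j : Fin n, ((j : ℕ) < t ∧ σ j = true) ↔ (σ j = true ∧ (j : ℕ) < t) := by tauto
  have h2 : ∀ j : Fin n, ((j : ℕ) < t ∧ ¬ σ j = true) ↔ (σ j = false ∧ (j : ℕ) < t) := by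
    intro j
    cases σ j <;> simp
  rw [Finset.filter_congr (fun j _ => h1 j), Finset.filter_congr (fun j _ => h2 j)]
  have e1 : ∀ j ∈ Finset.univ.filter (fun j : Fin n => σ j = true ∧ (j : ℕ) < t),
      sign (σ j) = 1 := by
    intro j hj
    simp [sign, (Finset.mem_filter.mp hj).2.1]
  have e2 : ∀ j ∈ Finset.univ.filter (fun j : Fin n => σ j = false ∧ (j : ℕ) < t),
      sign (σ j) = -1 := by
    intro j hj
    simp [sign, (Finset.mem_filter.mp hj).2.1]
  rw [Finset.sum_congr rfl e1, Finset.sum_congr rfl e2]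
  simp [pc, mc]
  ring

lemma pc_add_mc (t : ℕ) (ht : t ≤ n) : pc σ t + mc σ t = t := by
  rw [pc, mc]
  rw [← Finset.card_union_of_disjoint]
  · have : (Finset.univ.filter (fun j : Fin n => σ j = true ∧ (j : ℕ) < t)) ∪
        (Finset.univ.filter (fun j : Fin n => σ j = false ∧ (j : ℕ) < t)) =
        Finset.univ.filter (fun j : Fin n => (j : ℕ) < t) := by
      ext j
      simp only [Finset.mem_union, Finset.mem_filter, Finset.mem_univ, true_and]
      cases σ j <;> tauto
    rw [this, card_val_lt t ht]
  · rw [Finset.disjoint_filter]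
    intro j _ h1 h2
    rw [h1.1] at h2
    simp at h2

lemma drift_le (t : ℕ) (ht : t ≤ n) : (psum σ t).toNat ≤ drift σ := by
  apply Finset.le_sup (f := fun i =>
    (∑ j ∈ Finset.univ.filter (fun j : Fin n => (j : ℕ) < i), sign (σ j)).toNat)
  simp
  omega

lemma psum_flip (t : ℕ) : psum (fun j => !σ j) t = - psum σ t := by
  rw [psum, psum, ← Finset.sum_neg_distrib]
  apply Finset.sum_congr rfl
  intro j _
  cases h : σ j <;> simp [sign, h]

lemma abs_psum_le (H : ℕ) (hd1 : drift σ ≤ H) (hd2 : drift (fun j => !σ j) ≤ H)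
    (t : ℕ) (ht : t ≤ n) : |psum σ t| ≤ (H : ℤ) := by
  rcases le_or_gt 0 (psum σ t) with h | h
  · rw [abs_of_nonneg h]
    have := drift_le σ t ht
    omega
  · rw [abs_of_neg h]
    have := drift_le (fun j => !σ j) t ht
    rw [psum_flip] at this
    omega

lemma drift_exists : ∃ t ≤ n, (psum σ t).toNat = drift σ := by
  obtain ⟨i, hi, heq⟩ := Finset.exists_mem_eq_sup (Finset.range (n+1))
    (by simp : (Finset.range (n+1)).Nonempty)
    (fun i => (∑ j ∈ Finset.univ.filter (fun j : Fin n => (j : ℕ) < i), sign (σ j)).toNat)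
  exact ⟨i, by simpa using Nat.lt_succ_iff.mp (Finset.mem_range.mp hi), heq.symm⟩

lemma psum_attain (H : ℕ) (hH : H = max (drift σ) (drift (fun j => !σ j))) :
    ∃ t ≤ n, psum σ t = (H : ℤ) ∨ psum σ t = -(H : ℤ) := by
  rcases Nat.eq_zero_or_pos H with h0 | hpos
  · refine ⟨0, by omega, Or.inl ?_⟩
    rw [h0]
    simp [psum]
  · rcases le_total (drift (fun j => !σ j)) (drift σ) with hle | hle
    · have hmax : H = drift σ := by rw [hH]; exact max_eq_left hle
      obtain ⟨t, ht, heq⟩ := drift_exists σ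
      exact ⟨t, ht, Or.inl (by omega)⟩
    · have hmax : H = drift (fun j => !σ j) := by rw [hH]; exact max_eq_right hle
      obtain ⟨t, ht, heq⟩ := drift_exists (fun j => !σ j)
      rw [psum_flip] at heq
      exact ⟨t, ht, Or.inr (by omega)⟩

lemma drift_le_n : drift σ ≤ n := by
  apply Finset.sup_le
  intro i _
  have : (Finset.univ.filter (fun j : Fin n => (j : ℕ) < i)).sum (fun j => sign (σ j)) ≤
      (Finset.univ.filter (fun j : Fin n => (j : ℕ) < i)).card := by
    calc _ ≤ (Finset.univ.filter (fun j : Fin n => (j : ℕ) < i)).sum (fun _ => (1:ℤ)) :=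
          Finset.sum_le_sum (fun j _ => by rw [sign]; split <;> omega)
      _ = _ := by simp
  have hcard : (Finset.univ.filter (fun j : Fin n => (j : ℕ) < i)).card ≤ n := by
    calc _ ≤ (Finset.univ : Finset (Fin n)).card := Finset.card_filter_le _ _
      _ = n := by simp
  omega

end Psum

section Upper

theorem nu_upper (σ : Fin n → Bool) (w : Equiv.Perm (Fin n)) (H : ℕ)
    (hH : H = max (drift σ) (drift fun j => !σ j)) :
    2 * nu σ w + H ≤ n ∧ 3 * nu σ w ≤ n := by
  have hHn : H ≤ n := by
    rw [hH]
    exact max_le (drift_le_n σ) (drift_le_n _)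
  rcases Finset.eq_empty_or_nonempty (napkinless σ w) with hemp | ⟨c₀, hc₀⟩
  · rw [nu, hemp]
    simpa using hHn
  · have hc₀' : c₀ ∈ (dine σ w).2 := hc₀
    have h3 : 3 ≤ n := (napkinless_big σ w hc₀').1
    haveI : NeZero n := ⟨by omega⟩
    set N : Finset (Fin n) := (dine σ w).2 with hN
    have hnu : nu σ w = N.card := rfl
    have hAinj : Set.InjOn (AA σ w) N := fun c hc c' hc' h => AA_inj σ w hc hc' h
    have hBinj : Set.InjOn (BB σ w) N := fun c hc c' hc' h => BB_inj σ w hc hc' h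
    -- (1) 3ν ≤ n
    have hABdisj : Disjoint (N.image (AA σ w)) (N.image (BB σ w)) := by
      rw [Finset.disjoint_left]
      rintro a ha hb
      obtain ⟨c, hc, rfl⟩ := Finset.mem_image.mp ha
      obtain ⟨c', hc', heq⟩ := Finset.mem_image.mp hb
      exact AA_ne_BB σ w hc hc' heq.symm
    have hDisj2 : Disjoint (N.image (AA σ w) ∪ N.image (BB σ w)) N := by
      rw [Finset.disjoint_left]
      rintro a ha haN
      rcases Finset.mem_union.mp ha with h | h
      · obtain ⟨c, hc, rfl⟩ := Finset.mem_image.mp h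
        exact AA_not_napkinless σ w hc haN
      · obtain ⟨c, hc, rfl⟩ := Finset.mem_image.mp h
        exact BB_not_napkinless σ w hc haN
    have h3n : 3 * nu σ w ≤ n := by
      have hle := Finset.card_le_univ (N.image (AA σ w) ∪ N.image (BB σ w) ∪ N)
      rw [Finset.card_union_of_disjoint hDisj2, Finset.card_union_of_disjoint hABdisj,
        Finset.card_image_of_injOn hAinj, Finset.card_image_of_injOn hBinj] at hle
      simp only [Finset.card_univ, Fintype.card_fin] at hle
      omega
    refine ⟨?_, h3n⟩
    -- (2) 2ν + H ≤ n
    obtain ⟨t, htn, hcase⟩ := psum_attain σ H hH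
    have hpm := pc_add_mc σ t htn
    have hps := psum_eq σ t
    have hZ : (Finset.univ.filter fun x : Fin n => ¬ ((x : ℕ) < t)).card = n - t := by
      have := Finset.card_filter_add_card_filter_not
        (s := (Finset.univ : Finset (Fin n))) (p := fun x : Fin n => (x : ℕ) < t)
      rw [card_val_lt t htn] at this
      simp only [Finset.card_univ, Fintype.card_fin] at this
      omega
    rcases hcase with hpsum | hpsum
    · -- plus-heavy prefix : count with BB
      have hcnt : pc σ t = mc σ t + H := by
        rw [hpsum] at hps
        omega
      set X := N.filter (fun c => ((BB σ w c : ℕ) < t)) with hX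
      set Y := N.filter (fun c => ¬ ((BB σ w c : ℕ) < t)) with hY
      have hXY : X.card + Y.card = N.card :=
        Finset.card_filter_add_card_filter_not (p := fun c => ((BB σ w c : ℕ) < t))
      have h1 : X.card ≤ mc σ t := by
        apply Finset.card_le_card_of_injOn (BB σ w)
        · intro c hc
          obtain ⟨hcN, hct⟩ := Finset.mem_filter.mp hc
          exact Finset.mem_filter.mpr ⟨Finset.mem_univ _, (BB_spec σ w hcN).1, hct⟩
        · exact hBinj.mono (fun c hc => (Finset.mem_filter.mp hc).1)
      have h2 : Y.card + Y.card ≤ n - t := by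
        rw [← hZ]
        have hsub : Y.image (BB σ w) ∪ Y ⊆
            Finset.univ.filter fun x : Fin n => ¬ ((x : ℕ) < t) := by
          intro x hx
          rcases Finset.mem_union.mp hx with h | h
          · obtain ⟨c, hc, rfl⟩ := Finset.mem_image.mp h
            exact Finset.mem_filter.mpr ⟨Finset.mem_univ _,
              (Finset.mem_filter.mp hc).2⟩
          · obtain ⟨hcN, hct⟩ := Finset.mem_filter.mp h
            have hlt : (BB σ w x : ℕ) < (x : ℕ) := (BB_spec σ w hcN).2.1
            exact Finset.mem_filter.mpr ⟨Finset.mem_univ _, by omega⟩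
        have hdisj : Disjoint (Y.image (BB σ w)) Y := by
          rw [Finset.disjoint_left]
          rintro a ha haY
          obtain ⟨c, hc, rfl⟩ := Finset.mem_image.mp ha
          exact BB_not_napkinless σ w (Finset.mem_filter.mp hc).1
            (Finset.mem_filter.mp haY).1
        have := Finset.card_le_card hsub
        rw [Finset.card_union_of_disjoint hdisj,
          Finset.card_image_of_injOn (hBinj.mono (fun c hc => (Finset.mem_filter.mp hc).1))]
          at this
        exact this
      omega
    · -- minus-heavy prefix : count with AA
      have hcnt : mc σ t = pc σ t + H := by
        rw [hpsum] at hps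
        omega
      set X := N.filter (fun c => ((AA σ w c : ℕ) < t)) with hX
      set Y := N.filter (fun c => ¬ ((AA σ w c : ℕ) < t)) with hY
      have hXY : X.card + Y.card = N.card :=
        Finset.card_filter_add_card_filter_not (p := fun c => ((AA σ w c : ℕ) < t))
      have h1 : X.card ≤ pc σ t := by
        apply Finset.card_le_card_of_injOn (AA σ w)
        · intro c hc
          obtain ⟨hcN, hct⟩ := Finset.mem_filter.mp hc
          exact Finset.mem_filter.mpr ⟨Finset.mem_univ _, (AA_spec σ w hcN).1, hct⟩
        · exact hAinj.mono (fun c hc => (Finset.mem_filter.mp hc).1)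
      have h2 : Y.card + Y.card ≤ n - t := by
        rw [← hZ]
        have hsub : Y.image (AA σ w) ∪ Y ⊆
            Finset.univ.filter fun x : Fin n => ¬ ((x : ℕ) < t) := by
          intro x hx
          rcases Finset.mem_union.mp hx with h | h
          · obtain ⟨c, hc, rfl⟩ := Finset.mem_image.mp h
            exact Finset.mem_filter.mpr ⟨Finset.mem_univ _,
              (Finset.mem_filter.mp hc).2⟩
          · obtain ⟨hcN, hct⟩ := Finset.mem_filter.mp h
            have hlt : (AA σ w x : ℕ) < (x : ℕ) := (AA_spec σ w hcN).2.1
            exact Finset.mem_filter.mpr ⟨Finset.mem_univ _, by omega⟩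
        have hdisj : Disjoint (Y.image (AA σ w)) Y := by
          rw [Finset.disjoint_left]
          rintro a ha haY
          obtain ⟨c, hc, rfl⟩ := Finset.mem_image.mp ha
          exact AA_not_napkinless σ w (Finset.mem_filter.mp hc).1
            (Finset.mem_filter.mp haY).1
        have := Finset.card_le_card hsub
        rw [Finset.card_union_of_disjoint hdisj,
          Finset.card_image_of_injOn (hAinj.mono (fun c hc => (Finset.mem_filter.mp hc).1))]
          at this
        exact this
      omega

end Upper

section Kth

variable {N : ℕ}

lemma card_fin_le (k : Fin N) :
    (Finset.univ.filter fun j : Fin N => j ≤ k).card = (k : ℕ) + 1 := by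
  rw [show (Finset.univ.filter fun j : Fin N => j ≤ k) = Finset.Iic k from by
    ext j; simp]
  exact Fin.card_Iic _

lemma card_fin_lt (k : Fin N) :
    (Finset.univ.filter fun j : Fin N => j < k).card = (k : ℕ) := by
  rw [show (Finset.univ.filter fun j : Fin N => j < k) = Finset.Iio k from by
    ext j; simp]
  exact Fin.card_Iio _

lemma orderIso_le_iff (s : Finset (Fin n)) (h : s.card = N) (k : Fin N) (x : Fin n) :
    (s.orderIsoOfFin h k : Fin n) ≤ x ↔ (k : ℕ) < (s.filter (· ≤ x)).card := by
  set e := s.orderIsoOfFin h with he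
  constructor
  · intro hle
    have hsub : (Finset.univ.filter (fun j : Fin N => j ≤ k)).image (fun j => (e j : Fin n))
        ⊆ s.filter (· ≤ x) := by
      intro y hy
      obtain ⟨j, hj, rfl⟩ := Finset.mem_image.mp hy
      refine Finset.mem_filter.mpr ⟨(e j).2, ?_⟩
      calc (e j : Fin n) ≤ (e k : Fin n) := by
            have := e.monotone (Finset.mem_filter.mp hj).2
            exact_mod_cast this
        _ ≤ x := hle
    have hinj : Set.InjOn (fun j => (e j : Fin n)) (Finset.univ.filter (fun j : Fin N => j ≤ k)) := by
      intro u hu v hv huv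
      have : e u = e v := Subtype.ext huv
      exact e.injective this
    have := Finset.card_le_card hsub
    rw [Finset.card_image_of_injOn hinj, card_fin_le] at this
    omega
  · intro hlt
    by_contra hcon
    push_neg at hcon
    have hsub : s.filter (· ≤ x) ⊆
        (Finset.univ.filter (fun j : Fin N => j < k)).image (fun j => (e j : Fin n)) := by
      intro y hy
      obtain ⟨hys, hyx⟩ := Finset.mem_filter.mp hy
      refine Finset.mem_image.mpr ⟨e.symm ⟨y, hys⟩, ?_, by simp⟩
      refine Finset.mem_filter.mpr ⟨Finset.mem_univ _, ?_⟩
      have : (e (e.symm ⟨y, hys⟩) : Fin n) < (e k : Fin n) := by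
        simp only [OrderIso.apply_symm_apply]
        exact lt_of_le_of_lt hyx hcon
      have h2 : e (e.symm ⟨y, hys⟩) < e k := this
      exact e.lt_iff_lt.mp h2
    have := Finset.card_le_card hsub
    have hcard := Finset.card_image_le (s := Finset.univ.filter (fun j : Fin N => j < k))
      (f := fun j => (e j : Fin n))
    rw [card_fin_lt] at hcard
    omega

lemma orderIso_count (s : Finset (Fin n)) (h : s.card = N) (k : Fin N) :
    (s.filter (· ≤ (s.orderIsoOfFin h k : Fin n))).card = (k : ℕ) + 1 := by
  have h1 : (k : ℕ) < (s.filter (· ≤ (s.orderIsoOfFin h k : Fin n))).card :=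
    (orderIso_le_iff s h k _).mp le_rfl
  have h2 : (s.filter (· ≤ (s.orderIsoOfFin h k : Fin n))).card ≤ (k : ℕ) + 1 := by
    rcases Nat.lt_or_ge ((k : ℕ) + 1) N with hk | hk
    · by_contra hcon
      push_neg at hcon
      have := (orderIso_le_iff s h ⟨(k : ℕ) + 1, hk⟩ (s.orderIsoOfFin h k : Fin n)).mpr
        (by simpa using hcon)
      have hmono : (s.orderIsoOfFin h k : Fin n) < (s.orderIsoOfFin h ⟨(k : ℕ) + 1, hk⟩ : Fin n) := by
        have : (⟨(k : ℕ), k.isLt⟩ : Fin N) < ⟨(k : ℕ) + 1, hk⟩ := by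
          rw [Fin.lt_def]; simp
        have h3 := (s.orderIsoOfFin h).lt_iff_lt.mpr (by simpa using this)
        exact_mod_cast h3
      exact absurd (lt_of_lt_of_le hmono this) (lt_irrefl _)
    · calc _ ≤ s.card := Finset.card_filter_le _ _
        _ = N := h
        _ ≤ (k : ℕ) + 1 := hk
  omega

end Kth

section Triples

variable (σ : Fin n → Bool)

lemma psum_succ (t : ℕ) (ht : t < n) :
    psum σ (t + 1) = psum σ t + sign (σ ⟨t, ht⟩) := by
  rw [psum, psum, show (Finset.univ.filter fun j : Fin n => (j : ℕ) < t + 1)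
      = insert ⟨t, ht⟩ (Finset.univ.filter fun j : Fin n => (j : ℕ) < t) from by
    ext j
    simp only [Finset.mem_filter, Finset.mem_univ, true_and, Finset.mem_insert]
    rw [Fin.ext_iff]
    simp only [Fin.val_mk]
    omega]
  rw [Finset.sum_insert (by simp)]
  ring

lemma card_le_x (x : Fin n) : (Finset.univ.filter fun y : Fin n => y ≤ x).card = (x : ℕ) + 1 := by
  rw [show (Finset.univ.filter fun y : Fin n => y ≤ x)
      = (Finset.univ.filter fun y : Fin n => (y : ℕ) < (x : ℕ) + 1) from by
    ext y
    simp only [Fin.le_def, Nat.lt_succ_iff]]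
  exact card_val_lt ((x : ℕ) + 1) x.isLt

lemma pc_filter (x : Fin n) :
    pc σ ((x : ℕ) + 1) = ((Finset.univ.filter fun j : Fin n => σ j = true).filter (· ≤ x)).card := by
  rw [pc, Finset.filter_filter]
  congr 1
  ext j
  simp only [Fin.le_def, Nat.lt_succ_iff]

lemma mc_filter (x : Fin n) :
    mc σ ((x : ℕ) + 1) = ((Finset.univ.filter fun j : Fin n => σ j = false).filter (· ≤ x)).card := by
  rw [mc, Finset.filter_filter]
  congr 1
  ext j
  simp only [Fin.le_def, Nat.lt_succ_iff]

theorem exists_triples_s9 (H m : ℕ)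
    (hd1 : drift σ ≤ H) (hd2 : drift (fun j => !σ j) ≤ H)
    (h3m : 3 * m ≤ n) (h2m : 2 * m + H ≤ n) :
    ∃ a b c : Fin m → Fin n,
      (∀ k, σ (a k) = true) ∧ (∀ k, σ (b k) = false) ∧
      (∀ k, a k < c k ∧ b k < c k) ∧
      Function.Injective a ∧ Function.Injective b ∧ Function.Injective c ∧
      (∀ k l, a k ≠ b l) ∧ (∀ k l, a k ≠ c l) ∧ (∀ k l, b k ≠ c l) := by
  classical
  set P : Finset (Fin n) := Finset.univ.filter (fun j => σ j = true) with hPdef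
  set D : Finset (Fin n) := Finset.univ.filter (fun j => σ j = false) with hDdef
  -- the total counts
  have hpcn : pc σ n = P.card := by
    rw [pc, hPdef]
    congr 1
    ext j
    simp [j.isLt]
  have hmcn : mc σ n = D.card := by
    rw [mc, hDdef]
    congr 1
    ext j
    simp [j.isLt]
  have hsum_n : pc σ n + mc σ n = n := pc_add_mc σ n le_rfl
  have habs := abs_psum_le σ H hd1 hd2 n le_rfl
  have hps := psum_eq σ n
  have habs1 : (pc σ n : ℤ) - (mc σ n : ℤ) ≤ (H : ℤ) := by
    rw [← hps]
    exact (abs_le.mp habs).2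
  have habs2 : -(H : ℤ) ≤ (pc σ n : ℤ) - (mc σ n : ℤ) := by
    rw [← hps]
    exact (abs_le.mp habs).1
  have hmP : m ≤ P.card := by omega
  have hmD : m ≤ D.card := by omega
  set a : Fin m → Fin n := fun k => (P.orderIsoOfFin rfl ⟨(k : ℕ), by omega⟩ : Fin n) with hadef
  set b : Fin m → Fin n := fun k => (D.orderIsoOfFin rfl ⟨(k : ℕ), by omega⟩ : Fin n) with hbdef
  have haP : ∀ k, a k ∈ P := fun k => (P.orderIsoOfFin rfl _).2
  have hbD : ∀ k, b k ∈ D := fun k => (D.orderIsoOfFin rfl _).2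
  have haσ : ∀ k, σ (a k) = true := fun k => (Finset.mem_filter.mp (haP k)).2
  have hbσ : ∀ k, σ (b k) = false := fun k => (Finset.mem_filter.mp (hbD k)).2
  have hainj : Function.Injective a := by
    intro u v huv
    have := (P.orderIsoOfFin rfl).injective (Subtype.ext huv)
    have := Fin.val_eq_val .. |>.mpr this
    exact Fin.ext (by simpa using this)
  have hbinj : Function.Injective b := by
    intro u v huv
    have := (D.orderIsoOfFin rfl).injective (Subtype.ext huv)
    have := Fin.val_eq_val .. |>.mpr this
    exact Fin.ext (by simpa using this)
  set P' : Finset (Fin n) := Finset.univ.image a with hP'def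
  set D' : Finset (Fin n) := Finset.univ.image b with hD'def
  have hP'card : P'.card = m := by
    rw [hP'def, Finset.card_image_of_injective _ hainj]
    simp
  have hD'card : D'.card = m := by
    rw [hD'def, Finset.card_image_of_injective _ hbinj]
    simp
  have hP'P : P' ⊆ P := by
    intro y hy
    obtain ⟨k, -, rfl⟩ := Finset.mem_image.mp hy
    exact haP k
  have hD'D : D' ⊆ D := by
    intro y hy
    obtain ⟨k, -, rfl⟩ := Finset.mem_image.mp hy
    exact hbD k
  have hPDdisj : Disjoint P' D' := by
    rw [Finset.disjoint_left]
    intro y hy1 hy2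
    have h1 := (Finset.mem_filter.mp (hP'P hy1)).2
    have h2 := (Finset.mem_filter.mp (hD'D hy2)).2
    rw [h1] at h2
    simp at h2
  set F : Finset (Fin n) := Finset.univ \ (P' ∪ D') with hFdef
  have hFcard : F.card = n - 2 * m := by
    rw [hFdef, Finset.card_sdiff_of_subset (Finset.subset_univ _),
      Finset.card_union_of_disjoint hPDdisj, hP'card, hD'card]
    simp only [Finset.card_univ, Fintype.card_fin]
    omega
  set c : Fin m → Fin n := fun k =>
    (F.orderIsoOfFin rfl ⟨n - 3 * m + (k : ℕ), by omega⟩ : Fin n) with hcdef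
  have hcF : ∀ k, c k ∈ F := fun k => (F.orderIsoOfFin rfl _).2
  have hcinj : Function.Injective c := by
    intro u v huv
    have := (F.orderIsoOfFin rfl).injective (Subtype.ext huv)
    have := Fin.val_eq_val .. |>.mpr this
    simp only [Fin.val_mk] at this
    exact Fin.ext (by omega)
  -- the key counting inequality
  have hpart : ∀ x : Fin n, (x : ℕ) + 1 =
      (P'.filter (· ≤ x)).card + (D'.filter (· ≤ x)).card + (F.filter (· ≤ x)).card := by
    intro x
    have hun : Finset.univ.filter (fun y : Fin n => y ≤ x) =
        ((P'.filter (· ≤ x)) ∪ (D'.filter (· ≤ x))) ∪ (F.filter (· ≤ x)) := by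
      ext y
      constructor
      · intro hy
        have hy' := (Finset.mem_filter.mp hy).2
        by_cases h1 : y ∈ P'
        · exact Finset.mem_union_left _
            (Finset.mem_union_left _ (Finset.mem_filter.mpr ⟨h1, hy'⟩))
        · by_cases h2 : y ∈ D'
          · exact Finset.mem_union_left _
              (Finset.mem_union_right _ (Finset.mem_filter.mpr ⟨h2, hy'⟩))
          · refine Finset.mem_union_right _ (Finset.mem_filter.mpr ⟨?_, hy'⟩)
            rw [hFdef, Finset.mem_sdiff]
            exact ⟨Finset.mem_univ _, fun hc => by
              rcases Finset.mem_union.mp hc with hc | hc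
              exacts [h1 hc, h2 hc]⟩
      · intro hy
        refine Finset.mem_filter.mpr ⟨Finset.mem_univ _, ?_⟩
        rcases Finset.mem_union.mp hy with hy | hy
        · rcases Finset.mem_union.mp hy with hy | hy <;> exact (Finset.mem_filter.mp hy).2
        · exact (Finset.mem_filter.mp hy).2
    have hd1' : Disjoint (P'.filter (· ≤ x)) (D'.filter (· ≤ x)) :=
      Finset.disjoint_filter_filter hPDdisj
    have hd2' : Disjoint ((P'.filter (· ≤ x)) ∪ (D'.filter (· ≤ x))) (F.filter (· ≤ x)) := by
      rw [Finset.disjoint_left]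
      intro y hy hyF
      have hyF2 := (Finset.mem_filter.mp hyF).1
      rw [hFdef, Finset.mem_sdiff] at hyF2
      rcases Finset.mem_union.mp hy with h | h
      · exact hyF2.2 (Finset.mem_union_left _ (Finset.mem_filter.mp h).1)
      · exact hyF2.2 (Finset.mem_union_right _ (Finset.mem_filter.mp h).1)
    have hcx := card_le_x x
    rw [hun, Finset.card_union_of_disjoint hd2', Finset.card_union_of_disjoint hd1'] at hcx
    omega
  have hq : ∀ k : Fin m, (F.filter (· ≤ max (a k) (b k))).card ≤ n - 3 * m + (k : ℕ) := by
    intro k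
    have hk := k.isLt
    rcases le_total (b k) (a k) with hab | hab
    · -- x = a k  (k-th plus)
      set x : Fin n := a k with hxdef
      rw [max_eq_left hab]
      have hxn : (x : ℕ) + 1 ≤ n := x.isLt
      have hpcx : pc σ ((x : ℕ) + 1) = (k : ℕ) + 1 := by
        rw [pc_filter σ x]
        exact orderIso_count P rfl ⟨(k : ℕ), by omega⟩
      set β := mc σ ((x : ℕ) + 1) with hβdef
      have hsplit : (x : ℕ) + 1 = ((k : ℕ) + 1) + β := by
        have := pc_add_mc σ ((x : ℕ) + 1) hxn
        omega
      have hβle : β ≤ (k : ℕ) + H := by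
        have h1 : psum σ ((x : ℕ) + 1) = psum σ (x : ℕ) + 1 := by
          rw [psum_succ σ (x : ℕ) x.isLt]
          have hx : (⟨(x : ℕ), x.isLt⟩ : Fin n) = x := by exact Fin.ext rfl
          rw [hx, sign, if_pos (haσ k)]
        have h2 := abs_psum_le σ H hd1 hd2 (x : ℕ) (by omega)
        have h3 := psum_eq σ ((x : ℕ) + 1)
        rw [hpcx] at h3
        have h4 := (abs_le.mp h2).1
        omega
      have hP'x : (P'.filter (· ≤ x)).card = (k : ℕ) + 1 := by
        have hPP' : P'.filter (· ≤ x) = P.filter (· ≤ x) := by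
          apply Finset.Subset.antisymm
          · exact Finset.filter_subset_filter _ hP'P
          · intro p hp
            obtain ⟨hpP, hpx⟩ := Finset.mem_filter.mp hp
            set idx := (P.orderIsoOfFin rfl).symm ⟨p, hpP⟩ with hidx
            have hcoe : ((P.orderIsoOfFin rfl) idx : Fin n) = p := by
              rw [hidx]
              simp
            have hlt : (idx : ℕ) < (P.filter (· ≤ x)).card := by
              rw [← orderIso_le_iff P rfl idx x, hcoe]
              exact hpx
            have hcard : (P.filter (· ≤ x)).card = (k : ℕ) + 1 := by
              rw [← pc_filter σ x]
              exact hpcx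
            have hidxm : (idx : ℕ) < m := by omega
            refine Finset.mem_filter.mpr ⟨?_, hpx⟩
            rw [hP'def]
            refine Finset.mem_image.mpr ⟨⟨(idx : ℕ), hidxm⟩, Finset.mem_univ _, ?_⟩
            rw [hadef]
            simp only [Fin.val_mk]
            rw [Fin.eta]
            exact hcoe
        rw [hPP', ← pc_filter σ x]
        exact hpcx
      have hD'x : (D'.filter (· ≤ x)).card = min β m := by
        have himg : D'.filter (· ≤ x) =
            (Finset.univ.filter fun l : Fin m => (l : ℕ) < β).image b := by
          ext y
          constructor
          · intro hy
            obtain ⟨hy1, hy2⟩ := Finset.mem_filter.mp hy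
            rw [hD'def] at hy1
            obtain ⟨l, -, rfl⟩ := Finset.mem_image.mp hy1
            refine Finset.mem_image.mpr ⟨l, Finset.mem_filter.mpr ⟨Finset.mem_univ _, ?_⟩, rfl⟩
            have := (orderIso_le_iff D rfl ⟨(l : ℕ), by omega⟩ x).mp hy2
            rwa [← mc_filter σ x, ← hβdef] at this
          · intro hy
            obtain ⟨l, hl, rfl⟩ := Finset.mem_image.mp hy
            have hlβ := (Finset.mem_filter.mp hl).2
            refine Finset.mem_filter.mpr ⟨?_, ?_⟩
            · rw [hD'def]
              exact Finset.mem_image_of_mem _ (Finset.mem_univ l)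
            · refine (orderIso_le_iff D rfl ⟨(l : ℕ), by omega⟩ x).mpr ?_
              rw [← mc_filter σ x, ← hβdef]
              exact hlβ
        rw [himg, Finset.card_image_of_injective _ hbinj]
        rcases le_total β m with hβm | hβm
        · rw [card_val_lt β hβm]
          omega
        · rw [Finset.filter_true_of_mem (fun l _ => by
            have := l.isLt
            omega)]
          simp only [Finset.card_univ, Fintype.card_fin]
          omega
      have := hpart x
      omega
    · -- x = b k  (k-th minus)
      set x : Fin n := b k with hxdef
      rw [max_eq_right hab]
      have hxn : (x : ℕ) + 1 ≤ n := x.isLt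
      have hmcx : mc σ ((x : ℕ) + 1) = (k : ℕ) + 1 := by
        rw [mc_filter σ x]
        exact orderIso_count D rfl ⟨(k : ℕ), by omega⟩
      set β := pc σ ((x : ℕ) + 1) with hβdef
      have hsplit : (x : ℕ) + 1 = ((k : ℕ) + 1) + β := by
        have := pc_add_mc σ ((x : ℕ) + 1) hxn
        omega
      have hβle : β ≤ (k : ℕ) + H := by
        have h1 : psum σ ((x : ℕ) + 1) = psum σ (x : ℕ) - 1 := by
          rw [psum_succ σ (x : ℕ) x.isLt]
          have hx : (⟨(x : ℕ), x.isLt⟩ : Fin n) = x := by exact Fin.ext rfl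
          rw [hx, sign, if_neg (by rw [hbσ k]; simp)]
          ring
        have h2 := abs_psum_le σ H hd1 hd2 (x : ℕ) (by omega)
        have h3 := psum_eq σ ((x : ℕ) + 1)
        rw [hmcx] at h3
        have h4 := (abs_le.mp h2).2
        omega
      have hD'x : (D'.filter (· ≤ x)).card = (k : ℕ) + 1 := by
        have hDD' : D'.filter (· ≤ x) = D.filter (· ≤ x) := by
          apply Finset.Subset.antisymm
          · exact Finset.filter_subset_filter _ hD'D
          · intro p hp
            obtain ⟨hpD, hpx⟩ := Finset.mem_filter.mp hp
            set idx := (D.orderIsoOfFin rfl).symm ⟨p, hpD⟩ with hidx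
            have hcoe : ((D.orderIsoOfFin rfl) idx : Fin n) = p := by
              rw [hidx]
              simp
            have hlt : (idx : ℕ) < (D.filter (· ≤ x)).card := by
              rw [← orderIso_le_iff D rfl idx x, hcoe]
              exact hpx
            have hcard : (D.filter (· ≤ x)).card = (k : ℕ) + 1 := by
              rw [← mc_filter σ x]
              exact hmcx
            have hidxm : (idx : ℕ) < m := by omega
            refine Finset.mem_filter.mpr ⟨?_, hpx⟩
            rw [hD'def]
            refine Finset.mem_image.mpr ⟨⟨(idx : ℕ), hidxm⟩, Finset.mem_univ _, ?_⟩
            rw [hbdef]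
            simp only [Fin.val_mk]
            rw [Fin.eta]
            exact hcoe
        rw [hDD', ← mc_filter σ x]
        exact hmcx
      have hP'x : (P'.filter (· ≤ x)).card = min β m := by
        have himg : P'.filter (· ≤ x) =
            (Finset.univ.filter fun l : Fin m => (l : ℕ) < β).image a := by
          ext y
          constructor
          · intro hy
            obtain ⟨hy1, hy2⟩ := Finset.mem_filter.mp hy
            rw [hP'def] at hy1
            obtain ⟨l, -, rfl⟩ := Finset.mem_image.mp hy1
            refine Finset.mem_image.mpr ⟨l, Finset.mem_filter.mpr ⟨Finset.mem_univ _, ?_⟩, rfl⟩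
            have := (orderIso_le_iff P rfl ⟨(l : ℕ), by omega⟩ x).mp hy2
            rwa [← pc_filter σ x, ← hβdef] at this
          · intro hy
            obtain ⟨l, hl, rfl⟩ := Finset.mem_image.mp hy
            have hlβ := (Finset.mem_filter.mp hl).2
            refine Finset.mem_filter.mpr ⟨?_, ?_⟩
            · rw [hP'def]
              exact Finset.mem_image_of_mem _ (Finset.mem_univ l)
            · refine (orderIso_le_iff P rfl ⟨(l : ℕ), by omega⟩ x).mpr ?_
              rw [← pc_filter σ x, ← hβdef]
              exact hlβ
        rw [himg, Finset.card_image_of_injective _ hainj]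
        rcases le_total β m with hβm | hβm
        · rw [card_val_lt β hβm]
          omega
        · rw [Finset.filter_true_of_mem (fun l _ => by
            have := l.isLt
            omega)]
          simp only [Finset.card_univ, Fintype.card_fin]
          omega
      have := hpart x
      omega
  -- conclude a k, b k < c k
  have hc_gt : ∀ k, max (a k) (b k) < c k := by
    intro k
    by_contra hcon
    push_neg at hcon
    have := (orderIso_le_iff F rfl ⟨n - 3 * m + (k : ℕ), by omega⟩ (max (a k) (b k))).mp hcon
    simp only [Fin.val_mk] at this
    have := hq k
    omega
  refine ⟨a, b, c, haσ, hbσ, fun k => ⟨?_, ?_⟩, hainj, hbinj, hcinj, ?_, ?_, ?_⟩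
  · exact lt_of_le_of_lt (le_max_left _ _) (hc_gt k)
  · exact lt_of_le_of_lt (le_max_right _ _) (hc_gt k)
  · intro k l h
    have h1 := haσ k
    have h2 := hbσ l
    rw [h] at h1
    rw [h1] at h2
    simp at h2
  · intro k l h
    have := hcF l
    rw [hFdef, Finset.mem_sdiff] at this
    exact this.2 (Finset.mem_union_left _ (by
      rw [← h, hP'def]
      exact Finset.mem_image_of_mem _ (Finset.mem_univ k)))
  · intro k l h
    have := hcF l
    rw [hFdef, Finset.mem_sdiff] at this
    exact this.2 (Finset.mem_union_right _ (by
      rw [← h, hD'def]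
      exact Finset.mem_image_of_mem _ (Finset.mem_univ k)))

end Triples

section StepHelpers

variable (σ : Fin n → Bool) (w : Equiv.Perm (Fin n))

lemma state1_insert_pref (j : ℕ) (hj : j < n)
    (h : pref σ w ⟨j, hj⟩ ∉ (stateAt σ w j).1) :
    (stateAt σ w (j+1)).1 = insert (pref σ w ⟨j, hj⟩) (stateAt σ w j).1 := by
  rw [stateAt_succ σ w j hj, step, if_pos h]

lemma state1_insert_other (j : ℕ) (hj : j < n)
    (h : pref σ w ⟨j, hj⟩ ∈ (stateAt σ w j).1) (h2 : other σ w ⟨j, hj⟩ ∉ (stateAt σ w j).1) :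
    (stateAt σ w (j+1)).1 = insert (other σ w ⟨j, hj⟩) (stateAt σ w j).1 := by
  rw [stateAt_succ σ w j hj, step, if_neg (by simpa using h), if_pos h2]

lemma state1_stall (j : ℕ) (hj : j < n)
    (h : pref σ w ⟨j, hj⟩ ∈ (stateAt σ w j).1) (h2 : other σ w ⟨j, hj⟩ ∈ (stateAt σ w j).1) :
    (stateAt σ w (j+1)).1 = (stateAt σ w j).1 := by
  rw [stateAt_succ σ w j hj, step, if_neg (by simpa using h), if_neg (by simpa using h2)]

lemma state2_insert_pref (j : ℕ) (hj : j < n)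
    (h : pref σ w ⟨j, hj⟩ ∉ (stateAt σ w j).1) :
    (stateAt σ w (j+1)).2 = (stateAt σ w j).2 := by
  rw [stateAt_succ σ w j hj, step, if_pos h]

lemma state2_insert_other (j : ℕ) (hj : j < n)
    (h : pref σ w ⟨j, hj⟩ ∈ (stateAt σ w j).1) (h2 : other σ w ⟨j, hj⟩ ∉ (stateAt σ w j).1) :
    (stateAt σ w (j+1)).2 = (stateAt σ w j).2 := by
  rw [stateAt_succ σ w j hj, step, if_neg (by simpa using h), if_pos h2]

lemma state2_stall (j : ℕ) (hj : j < n)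
    (h : pref σ w ⟨j, hj⟩ ∈ (stateAt σ w j).1) (h2 : other σ w ⟨j, hj⟩ ∈ (stateAt σ w j).1) :
    (stateAt σ w (j+1)).2 = insert ⟨j, hj⟩ (stateAt σ w j).2 := by
  rw [stateAt_succ σ w j hj, step, if_neg (by simpa using h), if_neg (by simpa using h2)]

lemma state1_subset_succ (j : ℕ) (hj : j < n) :
    (stateAt σ w (j+1)).1 ⊆
      insert (pref σ w ⟨j, hj⟩) (insert (other σ w ⟨j, hj⟩) (stateAt σ w j).1) := by
  rw [stateAt_succ σ w j hj, step]
  split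
  · exact Finset.insert_subset_insert _ (Finset.subset_insert _ _)
  · split
    · intro y hy
      rcases Finset.mem_insert.mp hy with rfl | hy
      · exact Finset.mem_insert_of_mem (Finset.mem_insert_self _ _)
      · exact Finset.mem_insert_of_mem (Finset.mem_insert_of_mem hy)
    · intro y hy
      exact Finset.mem_insert_of_mem (Finset.mem_insert_of_mem hy)

lemma state1_untouched (j : ℕ) (hj : j < n) (p : Fin n)
    (h1 : p ≠ pref σ w ⟨j, hj⟩) (h2 : p ≠ other σ w ⟨j, hj⟩) :
    (p ∈ (stateAt σ w (j+1)).1 ↔ p ∈ (stateAt σ w j).1) := by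
  constructor
  · intro hp
    have := state1_subset_succ σ w j hj hp
    rcases Finset.mem_insert.mp this with h | h
    · exact absurd h h1
    · rcases Finset.mem_insert.mp h with h | h
      · exact absurd h h2
      · exact h
  · intro hp
    exact mono1 σ w (by omega) hp

lemma sub_one_val [NeZero n] (s : Fin n) (hs : 1 ≤ (s : ℕ)) :
    ((s - 1 : Fin n) : ℕ) = (s : ℕ) - 1 := by
  rw [← leftNapkin_eq]
  show ((s : ℕ) + (n - 1)) % n = (s : ℕ) - 1
  have h1 : (s : ℕ) < n := s.isLt
  have : (s : ℕ) + (n - 1) = ((s : ℕ) - 1) + 1 * n := by omega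
  rw [this, Nat.add_mul_mod_self_right]
  exact Nat.mod_eq_of_lt (by omega)

end StepHelpers

section Rotation

variable [NeZero n] (σ : Fin n → Bool) (w : Equiv.Perm (Fin n)) (r : Fin n)

lemma stateAt_rot (j : ℕ) :
    (stateAt σ ((Equiv.addRight r).trans w) j).1 = (stateAt σ w j).1.image (· - r) ∧
    (stateAt σ ((Equiv.addRight r).trans w) j).2 = (stateAt σ w j).2 := by
  set w' := (Equiv.addRight r).trans w with hw'
  have hseat : ∀ d : Fin n, seat w' d = seat w d - r := by
    intro d
    simp [seat, hw', Equiv.symm_trans_apply, sub_eq_add_neg]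
  have hpref : ∀ d : Fin n, pref σ w' d = pref σ w d - r := by
    intro d
    rw [pref, pref, hseat d]
    split <;> simp only [leftNapkin_eq] <;> ring
  have hother : ∀ d : Fin n, other σ w' d = other σ w d - r := by
    intro d
    rw [other, other, hseat d]
    split <;> simp only [leftNapkin_eq] <;> ring
  have hsubinj : Function.Injective (fun x : Fin n => x - r) := fun u v huv => by
    have : u - r = v - r := huv
    linear_combination this
  induction j with
  | zero => simp [stateAt]
  | succ j ih =>
    rcases Nat.lt_or_ge j n with hj | hj
    · obtain ⟨ih1, ih2⟩ := ih
      have hmem1 : pref σ w' ⟨j, hj⟩ ∈ (stateAt σ w' j).1 ↔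
          pref σ w ⟨j, hj⟩ ∈ (stateAt σ w j).1 := by
        rw [hpref, ih1]
        constructor
        · intro h
          obtain ⟨y, hy, hyeq⟩ := Finset.mem_image.mp h
          rwa [← hsubinj hyeq]
        · intro h
          exact Finset.mem_image_of_mem _ h
      have hmem2 : other σ w' ⟨j, hj⟩ ∈ (stateAt σ w' j).1 ↔
          other σ w ⟨j, hj⟩ ∈ (stateAt σ w j).1 := by
        rw [hother, ih1]
        constructor
        · intro h
          obtain ⟨y, hy, hyeq⟩ := Finset.mem_image.mp h
          rwa [← hsubinj hyeq]
        · intro h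
          exact Finset.mem_image_of_mem _ h
      by_cases h1 : pref σ w ⟨j, hj⟩ ∈ (stateAt σ w j).1
      · by_cases h2 : other σ w ⟨j, hj⟩ ∈ (stateAt σ w j).1
        · rw [state1_stall σ w' j hj (hmem1.mpr h1) (hmem2.mpr h2),
            state1_stall σ w j hj h1 h2,
            state2_stall σ w' j hj (hmem1.mpr h1) (hmem2.mpr h2),
            state2_stall σ w j hj h1 h2, ih2]
          exact ⟨ih1, rfl⟩
        · rw [state1_insert_other σ w' j hj (hmem1.mpr h1) (fun hc => h2 (hmem2.mp hc)),
            state1_insert_other σ w j hj h1 h2,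
            state2_insert_other σ w' j hj (hmem1.mpr h1) (fun hc => h2 (hmem2.mp hc)),
            state2_insert_other σ w j hj h1 h2]
          refine ⟨?_, ih2⟩
          rw [hother, ih1, Finset.image_insert]
      · rw [state1_insert_pref σ w' j hj (fun hc => h1 (hmem1.mp hc)),
          state1_insert_pref σ w j hj h1,
          state2_insert_pref σ w' j hj (fun hc => h1 (hmem1.mp hc)),
          state2_insert_pref σ w j hj h1]
        refine ⟨?_, ih2⟩
        rw [hpref, ih1, Finset.image_insert]
    · rw [stateAt_succ_ge σ w' j hj, stateAt_succ_ge σ w j hj]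
      exact ih

lemma nu_rot : nu σ ((Equiv.addRight r).trans w) = nu σ w := by
  rw [nu, nu, napkinless, napkinless, dine_eq, dine_eq]
  rw [(stateAt_rot σ w r n).2]

end Rotation

section Construction

variable [NeZero n]

theorem lower_exists (σ : Fin n → Bool) (m : ℕ) (h3m : 3 * m ≤ n)
    (a b c : Fin m → Fin n)
    (haσ : ∀ k, σ (a k) = true) (hbσ : ∀ k, σ (b k) = false)
    (hlt : ∀ k, a k < c k ∧ b k < c k)
    (hainj : Function.Injective a) (hbinj : Function.Injective b)
    (hcinj : Function.Injective c)
    (hab : ∀ k l, a k ≠ b l) (hac : ∀ k l, a k ≠ c l) (hbc : ∀ k l, b k ≠ c l) :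
    ∃ w : Equiv.Perm (Fin n), m ≤ nu σ w := by
  classical
  have hdisj1 : Disjoint (Finset.univ.image a) (Finset.univ.image b) := by
    rw [Finset.disjoint_left]
    rintro y hy1 hy2
    obtain ⟨k, -, rfl⟩ := Finset.mem_image.mp hy1
    obtain ⟨l, -, hl⟩ := Finset.mem_image.mp hy2
    exact hab k l hl.symm
  have hdisj2 : Disjoint (Finset.univ.image a ∪ Finset.univ.image b) (Finset.univ.image c) := by
    rw [Finset.disjoint_left]
    rintro y hy1 hy2
    obtain ⟨l, -, hl⟩ := Finset.mem_image.mp hy2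
    rcases Finset.mem_union.mp hy1 with h | h
    · obtain ⟨k, -, rfl⟩ := Finset.mem_image.mp h
      exact hac k l hl.symm
    · obtain ⟨k, -, rfl⟩ := Finset.mem_image.mp h
      exact hbc k l hl.symm
  set V : Finset (Fin n) :=
    Finset.univ.image a ∪ Finset.univ.image b ∪ Finset.univ.image c with hV
  have hVcard : V.card = 3 * m := by
    rw [hV, Finset.card_union_of_disjoint hdisj2, Finset.card_union_of_disjoint hdisj1,
      Finset.card_image_of_injective _ hainj, Finset.card_image_of_injective _ hbinj,
      Finset.card_image_of_injective _ hcinj]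
    simp only [Finset.card_univ, Fintype.card_fin]
    omega
  set G : Finset (Fin n) := Finset.univ \ V with hG
  have hGcard : G.card = n - 3 * m := by
    rw [hG, Finset.card_sdiff_of_subset (Finset.subset_univ _), hVcard]
    simp only [Finset.card_univ, Fintype.card_fin]
  set f : Fin n → Fin n := fun s =>
    if h0 : (s : ℕ) < 3 * m then
      (if (s : ℕ) % 3 = 0 then a ⟨(s : ℕ) / 3, by omega⟩
       else if (s : ℕ) % 3 = 1 then c ⟨(s : ℕ) / 3, by omega⟩
       else b ⟨(s : ℕ) / 3, by omega⟩)
    else (G.orderIsoOfFin rfl ⟨(s : ℕ) - 3 * m, by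
      have := s.isLt
      omega⟩ : Fin n) with hf
  have hfV : ∀ s : Fin n, (s : ℕ) < 3 * m → f s ∈ V := by
    intro s h0
    rw [hf]
    simp only [dif_pos h0]
    rw [hV]
    split
    · exact Finset.mem_union_left _ (Finset.mem_union_left _
        (Finset.mem_image_of_mem _ (Finset.mem_univ _)))
    · split
      · exact Finset.mem_union_right _ (Finset.mem_image_of_mem _ (Finset.mem_univ _))
      · exact Finset.mem_union_left _ (Finset.mem_union_right _
          (Finset.mem_image_of_mem _ (Finset.mem_univ _)))
  have hfG : ∀ s : Fin n, ¬ ((s : ℕ) < 3 * m) → f s ∈ G := by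
    intro s h0
    rw [hf]
    simp only [dif_neg h0]
    exact (G.orderIsoOfFin rfl _).2
  have hfinj : Function.Injective f := by
    intro s s' heq
    by_cases h0 : (s : ℕ) < 3 * m <;> by_cases h0' : (s' : ℕ) < 3 * m
    · rw [hf] at heq
      simp only [dif_pos h0, dif_pos h0'] at heq
      have hmod : (s : ℕ) % 3 < 3 := Nat.mod_lt _ (by omega)
      have hmod' : (s' : ℕ) % 3 < 3 := Nat.mod_lt _ (by omega)
      by_cases e1 : (s : ℕ) % 3 = 0
      · rw [if_pos e1] at heq
        by_cases e1' : (s' : ℕ) % 3 = 0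
        · rw [if_pos e1'] at heq
          have hv : ((s : ℕ) / 3 : ℕ) = (s' : ℕ) / 3 :=
            congrArg Fin.val (hainj heq)
          exact Fin.ext (by omega)
        · rw [if_neg e1'] at heq
          by_cases e2' : (s' : ℕ) % 3 = 1
          · rw [if_pos e2'] at heq
            exact absurd heq (hac _ _)
          · rw [if_neg e2'] at heq
            exact absurd heq (hab _ _)
      · rw [if_neg e1] at heq
        by_cases e2 : (s : ℕ) % 3 = 1
        · rw [if_pos e2] at heq
          by_cases e1' : (s' : ℕ) % 3 = 0
          · rw [if_pos e1'] at heq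
            exact absurd heq.symm (hac _ _)
          · rw [if_neg e1'] at heq
            by_cases e2' : (s' : ℕ) % 3 = 1
            · rw [if_pos e2'] at heq
              have hv : ((s : ℕ) / 3 : ℕ) = (s' : ℕ) / 3 :=
                congrArg Fin.val (hcinj heq)
              exact Fin.ext (by omega)
            · rw [if_neg e2'] at heq
              exact absurd heq.symm (hbc _ _)
        · rw [if_neg e2] at heq
          by_cases e1' : (s' : ℕ) % 3 = 0
          · rw [if_pos e1'] at heq
            exact absurd heq.symm (hab _ _)
          · rw [if_neg e1'] at heq
            by_cases e2' : (s' : ℕ) % 3 = 1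
            · rw [if_pos e2'] at heq
              exact absurd heq (hbc _ _)
            · rw [if_neg e2'] at heq
              have hv : ((s : ℕ) / 3 : ℕ) = (s' : ℕ) / 3 :=
                congrArg Fin.val (hbinj heq)
              exact Fin.ext (by omega)
    · exfalso
      have h1 := hfV s h0
      have h2 := hfG s' h0'
      rw [heq] at h1
      rw [hG, Finset.mem_sdiff] at h2
      exact h2.2 h1
    · exfalso
      have h1 := hfV s' h0'
      have h2 := hfG s h0
      rw [← heq] at h1
      rw [hG, Finset.mem_sdiff] at h2
      exact h2.2 h1
    · rw [hf] at heq
      simp only [dif_neg h0, dif_neg h0'] at heq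
      have := (G.orderIsoOfFin rfl).injective (Subtype.ext heq)
      have hv := congrArg Fin.val this
      simp only [Fin.val_mk] at hv
      have := s.isLt
      have := s'.isLt
      exact Fin.ext (by omega)
  set w : Equiv.Perm (Fin n) := Equiv.ofBijective f
    ((Finite.injective_iff_bijective).mp hfinj) with hw
  have hw_apply : ∀ s, w s = f s := fun s => rfl
  -- the napkins of trap k
  set nA : Fin m → Fin n := fun k => ⟨3 * (k : ℕ), by have := k.isLt; omega⟩ with hnA
  set nB : Fin m → Fin n := fun k => ⟨3 * (k : ℕ) + 1, by have := k.isLt; omega⟩ with hnB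
  set sB : Fin m → Fin n := fun k => ⟨3 * (k : ℕ) + 2, by have := k.isLt; omega⟩ with hnsB
  have hwa : ∀ k : Fin m, w (nA k) = a k := by
    intro k
    have hk := k.isLt
    rw [hw_apply, hf]
    simp only [hnA, Fin.val_mk]
    rw [dif_pos (by omega), if_pos (by omega)]
    congr 1
    apply Fin.ext
    simp only [Fin.val_mk]
    omega
  have hwc : ∀ k : Fin m, w (nB k) = c k := by
    intro k
    have hk := k.isLt
    rw [hw_apply, hf]
    simp only [hnB, Fin.val_mk]
    rw [dif_pos (by omega), if_neg (by omega), if_pos (by omega)]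
    congr 1
    apply Fin.ext
    simp only [Fin.val_mk]
    omega
  have hwb : ∀ k : Fin m, w (sB k) = b k := by
    intro k
    have hk := k.isLt
    rw [hw_apply, hf]
    simp only [hnsB, Fin.val_mk]
    rw [dif_pos (by omega), if_neg (by omega), if_neg (by omega)]
    congr 1
    apply Fin.ext
    simp only [Fin.val_mk]
    omega
  have hsa : ∀ k, w.symm (a k) = nA k := fun k => (Equiv.symm_apply_eq w).mpr (hwa k).symm
  have hsc : ∀ k, w.symm (c k) = nB k := fun k => (Equiv.symm_apply_eq w).mpr (hwc k).symm
  have hsb : ∀ k, w.symm (b k) = sB k := fun k => (Equiv.symm_apply_eq w).mpr (hwb k).symm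
  have hnAinj : Function.Injective nA := by
    intro u v huv
    have hv := congrArg Fin.val huv
    simp only [hnA, Fin.val_mk] at hv
    exact Fin.ext (by omega)
  have hnBinj : Function.Injective nB := by
    intro u v huv
    have hv := congrArg Fin.val huv
    simp only [hnB, Fin.val_mk] at hv
    exact Fin.ext (by omega)
  -- the invariant
  have hInv : ∀ j : ℕ, ∀ k : Fin m,
      (nA k ∈ (stateAt σ w j).1 ↔ (a k : ℕ) < j) ∧
      (nB k ∈ (stateAt σ w j).1 ↔ (b k : ℕ) < j) := by
    intro j
    induction j with
    | zero => intro k; simp [stateAt]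
    | succ j ih =>
      rcases Nat.lt_or_ge j n with hj | hj
      · set d : Fin n := ⟨j, hj⟩ with hd
        set s : Fin n := w.symm d with hs
        have hds : w s = d := Equiv.apply_symm_apply w d
        have hjd : (d : ℕ) = j := rfl
        by_cases h0 : (s : ℕ) < 3 * m
        · have hdf : d = f s := by rw [← hds]; exact hw_apply s
          by_cases e1 : (s : ℕ) % 3 = 0
          · -- arriving diner is a k0
            set k0 : Fin m := ⟨(s : ℕ) / 3, by omega⟩ with hk0
            have hda : d = a k0 := by rw [hdf, hf]; simp only [dif_pos h0, if_pos e1]; rfl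
            have hseq : s = nA k0 := by
              apply Fin.ext
              simp only [hnA, Fin.val_mk, hk0]
              omega
            have hvala : (a k0 : ℕ) = j := by rw [← hda]
            have hprefd : pref σ w d = nA k0 := by
              rw [pref, if_pos (by rw [hda]; exact haσ k0)]
              rw [seat, ← hs, hseq]
            have hnot : pref σ w d ∉ (stateAt σ w j).1 := by
              rw [hprefd, (ih k0).1]
              omega
            have hstep := state1_insert_pref σ w j hj hnot
            intro k
            have hk := k.isLt
            have hk0v := k0.isLt
            constructor
            · rw [hstep, hprefd, Finset.mem_insert, (ih k).1]
              constructor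
              · rintro (h | h)
                · have : k = k0 := hnAinj h
                  rw [this]
                  omega
                · omega
              · intro h
                by_cases hkk : k = k0
                · exact Or.inl (by rw [hkk])
                · refine Or.inr ?_
                  have : (a k : ℕ) ≠ j := by
                    intro hcon
                    exact hkk (hainj (Fin.ext (by omega : (a k : ℕ) = (a k0 : ℕ))))
                  omega
            · rw [hstep, hprefd, Finset.mem_insert, (ih k).2]
              have hne : nB k ≠ nA k0 := by
                intro hcon
                have hv := congrArg Fin.val hcon
                simp only [hnA, hnB, Fin.val_mk] at hv
                omega
              have hbj : (b k : ℕ) ≠ j := by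
                intro hcon
                have : b k = a k0 := by
                  rw [← hda]
                  exact Fin.ext (by omega)
                exact hab k0 k this.symm
              constructor
              · rintro (h | h)
                · exact absurd h hne
                · omega
              · intro h
                exact Or.inr (by omega)
          · by_cases e2 : (s : ℕ) % 3 = 1
            · -- arriving diner is c k0 : both napkins taken, nothing changes
              set k0 : Fin m := ⟨(s : ℕ) / 3, by omega⟩ with hk0
              have hdc : d = c k0 := by
                rw [hdf, hf]; simp only [dif_pos h0, if_neg e1, if_pos e2]; rfl
              have hseq : s = nB k0 := by
                apply Fin.ext
                simp only [hnB, Fin.val_mk, hk0]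
                omega
              have hvalc : (c k0 : ℕ) = j := by rw [← hdc]
              have hsub1 : s - 1 = nA k0 := by
                apply Fin.ext
                rw [sub_one_val _ (by omega)]
                simp only [hnA, hnB, Fin.val_mk, hk0]
                omega
              have hmem1 : s ∈ (stateAt σ w j).1 := by
                rw [hseq, (ih k0).2]
                have := (hlt k0).2
                rw [Fin.lt_def] at this
                omega
              have hmem2 : s - 1 ∈ (stateAt σ w j).1 := by
                rw [hsub1, (ih k0).1]
                have := (hlt k0).1
                rw [Fin.lt_def] at this
                omega
              have hprefmem : pref σ w d ∈ (stateAt σ w j).1 := by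
                rw [pref]
                split
                · rw [seat, ← hs]; exact hmem1
                · rw [seat, ← hs, leftNapkin_eq]; exact hmem2
              have hothermem : other σ w d ∈ (stateAt σ w j).1 := by
                rw [other]
                split
                · rw [seat, ← hs, leftNapkin_eq]; exact hmem2
                · rw [seat, ← hs]; exact hmem1
              have hstep := state1_stall σ w j hj hprefmem hothermem
              intro k
              have haj : (a k : ℕ) ≠ j := by
                intro hcon
                exact hac k k0 (Fin.ext (by omega : (a k : ℕ) = (c k0 : ℕ)))
              have hbj : (b k : ℕ) ≠ j := by
                intro hcon
                exact hbc k k0 (Fin.ext (by omega : (b k : ℕ) = (c k0 : ℕ)))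
              rw [hstep, (ih k).1, (ih k).2]
              constructor
              · constructor
                · intro h; omega
                · intro h; omega
              · constructor
                · intro h; omega
                · intro h; omega
            · -- arriving diner is b k0
              set k0 : Fin m := ⟨(s : ℕ) / 3, by omega⟩ with hk0
              have hdb : d = b k0 := by
                rw [hdf, hf]; simp only [dif_pos h0, if_neg e1, if_neg e2]; rfl
              have hvalb : (b k0 : ℕ) = j := by rw [← hdb]
              have hsub1 : s - 1 = nB k0 := by
                apply Fin.ext
                rw [sub_one_val _ (by omega)]
                simp only [hnB, Fin.val_mk, hk0]
                omega
              have hprefd : pref σ w d = nB k0 := by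
                rw [pref, if_neg (by rw [hdb, hbσ k0]; simp)]
                rw [seat, ← hs, leftNapkin_eq, hsub1]
              have hnot : pref σ w d ∉ (stateAt σ w j).1 := by
                rw [hprefd, (ih k0).2]
                omega
              have hstep := state1_insert_pref σ w j hj hnot
              intro k
              have hk := k.isLt
              constructor
              · rw [hstep, hprefd, Finset.mem_insert, (ih k).1]
                have hne : nA k ≠ nB k0 := by
                  intro hcon
                  have hv := congrArg Fin.val hcon
                  simp only [hnA, hnB, Fin.val_mk] at hv
                  omega
                have haj : (a k : ℕ) ≠ j := by
                  intro hcon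
                  exact hab k k0 (Fin.ext (by omega : (a k : ℕ) = (b k0 : ℕ)))
                constructor
                · rintro (h | h)
                  · exact absurd h hne
                  · omega
                · intro h
                  exact Or.inr (by omega)
              · rw [hstep, hprefd, Finset.mem_insert, (ih k).2]
                constructor
                · rintro (h | h)
                  · have : k = k0 := hnBinj h
                    rw [this]
                    omega
                  · omega
                · intro h
                  by_cases hkk : k = k0
                  · exact Or.inl (by rw [hkk])
                  · refine Or.inr ?_
                    have : (b k : ℕ) ≠ j := by
                      intro hcon
                      exact hkk (hbinj (Fin.ext (by omega : (b k : ℕ) = (b k0 : ℕ))))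
                    omega
        · -- free diner : no protected napkin is touched
          intro k
          have hk := k.isLt
          have h1m : 1 ≤ m := by omega
          have h3mn : 3 ≤ 3 * m := by omega
          have hsval : 3 * m ≤ (s : ℕ) := by omega
          have hprefval : 3 * m - 1 ≤ (pref σ w d : ℕ) := by
            rw [pref]
            split
            · rw [seat, ← hs]; omega
            · rw [seat, ← hs, leftNapkin_eq, sub_one_val _ (by omega)]; omega
          have hotherval : 3 * m - 1 ≤ (other σ w d : ℕ) := by
            rw [other]
            split
            · rw [seat, ← hs, leftNapkin_eq, sub_one_val _ (by omega)]; omega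
            · rw [seat, ← hs]; omega
          have haj : (a k : ℕ) ≠ j := by
            intro hcon
            have had : a k = d := Fin.ext (by omega)
            have h1 : w.symm (a k) = s := by rw [had]
            rw [hsa k] at h1
            have h2 := congrArg Fin.val h1
            simp only [hnA, Fin.val_mk] at h2
            omega
          have hbj : (b k : ℕ) ≠ j := by
            intro hcon
            have had : b k = d := Fin.ext (by omega)
            have h1 : w.symm (b k) = s := by rw [had]
            rw [hsb k] at h1
            have h2 := congrArg Fin.val h1
            simp only [hnsB, Fin.val_mk] at h2
            omega
          have hpv : 3 * m - 1 ≤ ((pref σ w ⟨j, hj⟩ : Fin n) : ℕ) := hprefval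
          have hov : 3 * m - 1 ≤ ((other σ w ⟨j, hj⟩ : Fin n) : ℕ) := hotherval
          have hu1 : nA k ∈ (stateAt σ w (j+1)).1 ↔ nA k ∈ (stateAt σ w j).1 := by
            apply state1_untouched σ w j hj
            · intro hcon
              have h2 := congrArg Fin.val hcon
              simp only [hnA, Fin.val_mk] at h2
              omega
            · intro hcon
              have h2 := congrArg Fin.val hcon
              simp only [hnA, Fin.val_mk] at h2
              omega
          have hu2 : nB k ∈ (stateAt σ w (j+1)).1 ↔ nB k ∈ (stateAt σ w j).1 := by
            apply state1_untouched σ w j hj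
            · intro hcon
              have h2 := congrArg Fin.val hcon
              simp only [hnB, Fin.val_mk] at h2
              omega
            · intro hcon
              have h2 := congrArg Fin.val hcon
              simp only [hnB, Fin.val_mk] at h2
              omega
          constructor
          · rw [hu1, (ih k).1]
            constructor <;> intro <;> omega
          · rw [hu2, (ih k).2]
            constructor <;> intro <;> omega
      · -- j ≥ n
        intro k
        rw [stateAt_succ_ge σ w j hj]
        have h1 := (ih k).1
        have h2 := (ih k).2
        have := (a k).isLt
        have := (b k).isLt
        constructor
        · rw [h1]; constructor <;> intro <;> omega
        · rw [h2]; constructor <;> intro <;> omega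
  -- every c k is napkinless
  have hsubBA : ∀ k : Fin m, nB k - 1 = nA k := by
    intro k
    have hk := k.isLt
    apply Fin.ext
    rw [sub_one_val _ (by simp only [hnB, Fin.val_mk]; omega)]
    simp only [hnA, hnB, Fin.val_mk]
    omega
  have hcmem : ∀ k : Fin m, c k ∈ (dine σ w).2 := by
    intro k
    have hk := k.isLt
    rw [dine_eq, mem2_iff]
    have hm1 : nB k ∈ (stateAt σ w ((c k : ℕ))).1 := by
      rw [(hInv (c k : ℕ) k).2]
      have := (hlt k).2
      rw [Fin.lt_def] at this
      omega
    have hm2 : nB k - 1 ∈ (stateAt σ w ((c k : ℕ))).1 := by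
      rw [hsubBA k, (hInv (c k : ℕ) k).1]
      have := (hlt k).1
      rw [Fin.lt_def] at this
      omega
    refine ⟨(c k).isLt, ?_, ?_⟩
    · rw [pref, seat]
      split
      · rw [hsc k]
        exact hm1
      · rw [leftNapkin_eq, hsc k]
        exact hm2
    · rw [other, seat]
      split
      · rw [leftNapkin_eq, hsc k]
        exact hm2
      · rw [hsc k]
        exact hm1
  have himg : Finset.univ.image c ⊆ (dine σ w).2 := by
    intro y hy
    obtain ⟨k, -, rfl⟩ := Finset.mem_image.mp hy
    exact hcmem k
  have hcard := Finset.card_le_card himg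
  rw [Finset.card_image_of_injective _ hcinj] at hcard
  simp only [Finset.card_univ, Fintype.card_fin] at hcard
  exact ⟨w, by rw [nu, napkinless]; exact hcard⟩

end Construction


/-- With `q = ⌊n/3⌋` and `h = max(h(σ), h(-σ))`, the maximal number of
napkinless diners is exactly `ν_max(σ) = min{q, ⌊(n-h)/2⌋}`. -/
theorem statement9 (n : ℕ) (hn : 1 ≤ n) (q : ℕ) (hq : q = n / 3)
    (σ : Fin n → Bool) (h : ℕ) (hmax : h = max (drift σ) (drift fun j => !σ j)) :
    nuMax σ = min q ((n - h) / 2) := by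
  haveI : NeZero n := ⟨by omega⟩
  have hupper : ∀ w : Equiv.Perm (Fin n), nu σ w ≤ min q ((n - h) / 2) := by
    intro w
    obtain ⟨h1, h2⟩ := nu_upper σ w h hmax
    omega
  apply le_antisymm
  · apply Finset.sup_le
    intro w hw
    exact hupper w
  · set m := min q ((n - h) / 2) with hm
    have hHn : h ≤ n := hmax ▸ max_le (drift_le_n σ) (drift_le_n _)
    have h3m : 3 * m ≤ n := by omega
    have h2m : 2 * m + h ≤ n := by omega
    obtain ⟨a, b, c, haσ, hbσ, hlt, ha, hb, hc, hab, hac, hbc⟩ :=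
      exists_triples_s9 σ h m (hmax ▸ le_max_left _ _) (hmax ▸ le_max_right _ _) h3m h2m
    obtain ⟨w0, hw0⟩ := lower_exists σ m h3m a b c haσ hbσ hlt ha hb hc hab hac hbc
    set w' : Equiv.Perm (Fin n) := (Equiv.addRight (w0.symm 0)).trans w0 with hw'
    have hseating : IsSeating w' := by
      intro i hi
      have hi0 : i = 0 := Fin.ext (by simpa using hi)
      rw [hi0]
      show ((w0 ((Equiv.addRight (w0.symm 0)) 0) : Fin n) : ℕ) = 0
      simp
    have hmem : w' ∈ Finset.univ.filter (fun w : Equiv.Perm (Fin n) => IsSeating w) :=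
      Finset.mem_filter.mpr ⟨Finset.mem_univ _, hseating⟩
    calc m ≤ nu σ w0 := hw0
      _ = nu σ w' := (nu_rot σ w0 (w0.symm 0)).symm
      _ ≤ nuMax σ := Finset.le_sup hmem

end Napkin
end
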